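/- arXiv:1510.04865 — 7 statements merged into one kernel-verified Lean document; each statement's English description precedes it below -/
import Mathlib

section
/- Let s = −2, and for v, w > 0 define K(v,w) = {(x,y) ∈ ℝ² : 0 ≤ x ≤ v and w ≤ y ≤ w + v − x}. If (α, β) is a solution of the system on an interval J with β(t) > 0 for all t ∈ J, and l ∈ J satisfies α(l) > 0, then for every t ∈ J with t ≥ l one has (α(t), β(t)) ∈ K(α(l), β(l)); that is, 0 ≤ α(t) ≤ α(l) and β(l) ≤ β(t) ≤ β(l) + α(l) − α(t). -/
open Real Filter Set Topology
open scoped ENNReal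

/-- The vector field of the spinor-flow ODE system on Berger spheres,
with parameter `s = aλ ∈ {2, -2}`. -/
noncomputable def F (s x y : ℝ) : ℝ × ℝ :=
  (-(9/32) * x^3 / y^4 + (s/4) * x^2 / y^3 - (1/4) * x / y^2,
   (3/32) * x^2 / y^3 - (s/16) * x / y^2)

/-- `(α, β)` is a solution of the system on the set `J`, with `β` never zero. -/
def IsSolutionOn (s : ℝ) (α β : ℝ → ℝ) (J : Set ℝ) : Prop :=
  ∀ t ∈ J, β t ≠ 0 ∧
    HasDerivAt α (F s (α t) (β t)).1 t ∧
    HasDerivAt β (F s (α t) (β t)).2 t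

lemma F1_nonpos {x y : ℝ} (hx : 0 ≤ x) (hy : 0 < y) : (F (-2) x y).1 ≤ 0 := by
  have e : (F (-2) x y).1
      = -((9/32)*(x^3/y^4) + (1/2)*(x^2/y^3) + (1/4)*(x/y^2)) := by
    simp only [F]; ring
  rw [e]
  have h : 0 ≤ (9/32)*(x^3/y^4) + (1/2)*(x^2/y^3) + (1/4)*(x/y^2) := by positivity
  linarith

lemma F2_nonneg {x y : ℝ} (hx : 0 ≤ x) (hy : 0 < y) : 0 ≤ (F (-2) x y).2 := by
  have e : (F (-2) x y).2 = (3/32)*(x^2/y^3) + (1/8)*(x/y^2) := by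
    simp only [F]; ring
  rw [e]
  positivity

lemma Fsum_nonpos {x y : ℝ} (hx : 0 ≤ x) (hy : 0 < y) :
    (F (-2) x y).1 + (F (-2) x y).2 ≤ 0 := by
  have e : (F (-2) x y).1 + (F (-2) x y).2
      = -((9/32)*(x^3/y^4) + (13/32)*(x^2/y^3) + (1/8)*(x/y^2)) := by
    simp only [F]; ring
  rw [e]
  have h : 0 ≤ (9/32)*(x^3/y^4) + (13/32)*(x^2/y^3) + (1/8)*(x/y^2) := by positivity
  linarith

lemma key_ineq {x y v w : ℝ} (hx0 : 0 ≤ x) (hxv : x ≤ v) (hw : 0 < w) (hwy : w ≤ y) :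
    0 ≤ ((9:ℝ)/32*v^2/w^4 + 1/2*v/w^3 + 1/4/w^2) * x + (F (-2) x y).1 := by
  have hy : 0 < y := hw.trans_le hwy
  have hv0 : 0 ≤ v := hx0.trans hxv
  have e : (F (-2) x y).1
      = -((9/32)*(x^3/y^4) + (1/2)*(x^2/y^3) + (1/4)*(x/y^2)) := by
    simp only [F]; ring
  rw [e]
  have h1 : x^3/y^4 ≤ v^2/w^4*x := by
    have h : x^3/y^4 ≤ (v^2*x)/w^4 := by
      refine div_le_div₀ (mul_nonneg (by positivity) hx0) ?_ (by positivity)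
        (pow_le_pow_left₀ hw.le hwy 4)
      nlinarith [mul_nonneg (mul_nonneg hx0 hx0) (sub_nonneg.mpr hxv),
        mul_nonneg hv0 (mul_nonneg hx0 (sub_nonneg.mpr hxv))]
    have he : (v^2*x)/w^4 = v^2/w^4*x := by ring
    linarith [h, he.le]
  have h2 : x^2/y^3 ≤ v/w^3*x := by
    have h : x^2/y^3 ≤ (v*x)/w^3 := by
      refine div_le_div₀ (mul_nonneg hv0 hx0) ?_ (by positivity)
        (pow_le_pow_left₀ hw.le hwy 3)
      nlinarith [mul_nonneg hx0 (sub_nonneg.mpr hxv)]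
    have he : (v*x)/w^3 = v/w^3*x := by ring
    linarith [h, he.le]
  have h3 : x/y^2 ≤ 1/w^2*x := by
    have h : x/y^2 ≤ x/w^2 :=
      div_le_div₀ hx0 le_rfl (by positivity) (pow_le_pow_left₀ hw.le hwy 2)
    have he : x/w^2 = 1/w^2*x := by ring
    linarith [h, he.le]
  have e2 : ((9:ℝ)/32*v^2/w^4 + 1/2*v/w^3 + 1/4/w^2) * x
      = (9/32)*(v^2/w^4*x) + (1/2)*(v/w^3*x) + (1/4)*(1/w^2*x) := by ring
  linarith [h1, h2, h3, e2.le, e2.ge]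

lemma solKey {J : Set ℝ} {α β : ℝ → ℝ}
    (hsol : IsSolutionOn (-2) α β J) (hβ : ∀ t ∈ J, 0 < β t)
    {a b : ℝ} (hIJ : Set.Icc a b ⊆ J)
    (hnn : ∀ u ∈ Set.Icc a b, 0 ≤ α u) :
    AntitoneOn α (Set.Icc a b) ∧ MonotoneOn β (Set.Icc a b) ∧
      AntitoneOn (fun u => α u + β u) (Set.Icc a b) := by
  have hderα : ∀ u ∈ Set.Icc a b, HasDerivAt α (F (-2) (α u) (β u)).1 u :=
    fun u hu => (hsol u (hIJ hu)).2.1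
  have hderβ : ∀ u ∈ Set.Icc a b, HasDerivAt β (F (-2) (α u) (β u)).2 u :=
    fun u hu => (hsol u (hIJ hu)).2.2
  have hβpos : ∀ u ∈ Set.Icc a b, 0 < β u := fun u hu => hβ u (hIJ hu)
  refine ⟨?_, ?_, ?_⟩
  · apply antitoneOn_of_deriv_nonpos (convex_Icc a b)
      (fun u hu => (hderα u hu).continuousAt.continuousWithinAt)
    · intro u hu
      rw [interior_Icc] at hu
      exact ((hderα u (Ioo_subset_Icc_self hu)).differentiableAt).differentiableWithinAt
    · intro u hu
      rw [interior_Icc] at hu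
      have hu' := Ioo_subset_Icc_self hu
      rw [(hderα u hu').deriv]
      exact F1_nonpos (hnn u hu') (hβpos u hu')
  · apply monotoneOn_of_deriv_nonneg (convex_Icc a b)
      (fun u hu => (hderβ u hu).continuousAt.continuousWithinAt)
    · intro u hu
      rw [interior_Icc] at hu
      exact ((hderβ u (Ioo_subset_Icc_self hu)).differentiableAt).differentiableWithinAt
    · intro u hu
      rw [interior_Icc] at hu
      have hu' := Ioo_subset_Icc_self hu
      rw [(hderβ u hu').deriv]
      exact F2_nonneg (hnn u hu') (hβpos u hu')
  · apply antitoneOn_of_deriv_nonpos (convex_Icc a b)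
      (fun u hu => (((hderα u hu).add (hderβ u hu)).continuousAt).continuousWithinAt)
    · intro u hu
      rw [interior_Icc] at hu
      exact (((hderα u (Ioo_subset_Icc_self hu)).add
        (hderβ u (Ioo_subset_Icc_self hu))).differentiableAt).differentiableWithinAt
    · intro u hu
      rw [interior_Icc] at hu
      have hu' := Ioo_subset_Icc_self hu
      rw [((hderα u hu').add (hderβ u hu')).deriv]
      exact Fsum_nonpos (hnn u hu') (hβpos u hu')

/-- For `s = -2`, the compact sets `K(v,w)` trap the solutions: once a solution enters
with `α(l) > 0`, it stays in `K(α(l), β(l))` for all later times. -/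
theorem trapped_in_K (J : Set ℝ) (hJ : J.OrdConnected) (α β : ℝ → ℝ)
    (hsol : IsSolutionOn (-2) α β J) (hβ : ∀ t ∈ J, 0 < β t)
    (l : ℝ) (hl : l ∈ J) (hαl : 0 < α l) :
    ∀ t ∈ J, l ≤ t →
      0 ≤ α t ∧ α t ≤ α l ∧ β l ≤ β t ∧ β t ≤ β l + α l - α t := by
  intro t htJ hlt
  have hIJ : Set.Icc l t ⊆ J := hJ.out hl htJ
  have hconα : ContinuousOn α (Set.Icc l t) :=
    fun u hu => ((hsol u (hIJ hu)).2.1).continuousAt.continuousWithinAt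
  have hw : 0 < β l := hβ l hl
  set v := α l with hv
  set w := β l with hwdef
  set C := (9:ℝ)/32*v^2/w^4 + 1/2*v/w^3 + 1/4/w^2 with hC
  -- Step 1: positivity of α on [l, t]
  have hpos : ∀ u ∈ Set.Icc l t, 0 < α u := by
    by_contra hcon
    push_neg at hcon
    obtain ⟨s₀, hs₀I, hs₀⟩ := hcon
    set B := Set.Icc l t ∩ α ⁻¹' (Set.Iic 0) with hBdef
    have hBne : B.Nonempty := ⟨s₀, hs₀I, hs₀⟩
    have hBbdd : BddBelow B := (bddBelow_Icc).mono Set.inter_subset_left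
    have hBclosed : IsClosed B :=
      hconα.preimage_isClosed_of_isClosed isClosed_Icc isClosed_Iic
    set t₀ := sInf B with ht₀def
    have ht₀B : t₀ ∈ B := hBclosed.csInf_mem hBne hBbdd
    have ht₀I : t₀ ∈ Set.Icc l t := ht₀B.1
    have ht₀0 : α t₀ ≤ 0 := ht₀B.2
    have hlt₀ : l < t₀ := by
      rcases lt_or_eq_of_le ht₀I.1 with h | h
      · exact h
      · exfalso; rw [← h] at ht₀0; linarith
    have hposIco : ∀ u ∈ Set.Ico l t₀, 0 < α u := by
      intro u hu
      by_contra h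
      push_neg at h
      have huB : u ∈ B := ⟨⟨hu.1, hu.2.le.trans ht₀I.2⟩, h⟩
      exact absurd (csInf_le hBbdd huB) (not_le.mpr hu.2)
    have hα0 : 0 ≤ α t₀ := by
      have hne : (𝓝[Set.Ico l t₀] t₀).NeBot := by
        apply mem_closure_iff_nhdsWithin_neBot.mp
        rw [closure_Ico hlt₀.ne]
        exact ⟨hlt₀.le, le_rfl⟩
      have htend : Filter.Tendsto α (𝓝[Set.Ico l t₀] t₀) (𝓝 (α t₀)) :=
        (hconα t₀ ht₀I).mono (fun u hu => ⟨hu.1, hu.2.le.trans ht₀I.2⟩)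
      exact ge_of_tendsto htend
        (eventually_nhdsWithin_of_forall (fun u hu => (hposIco u hu).le))
    have hnn0 : ∀ u ∈ Set.Icc l t₀, 0 ≤ α u := by
      intro u hu
      rcases lt_or_eq_of_le hu.2 with h | h
      · exact (hposIco u ⟨hu.1, h⟩).le
      · rw [h]; exact hα0
    have hIJ₀ : Set.Icc l t₀ ⊆ J := (Set.Icc_subset_Icc_right ht₀I.2).trans hIJ
    obtain ⟨hant, hmon, _⟩ := solKey hsol hβ hIJ₀ hnn0
    have hlm : l ∈ Set.Icc l t₀ := ⟨le_rfl, hlt₀.le⟩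
    -- Gronwall-type argument with h u = exp (C u) * α u
    set h : ℝ → ℝ := fun u => Real.exp (C*u) * α u with hhdef
    have hderh : ∀ u ∈ Set.Icc l t₀, HasDerivAt h
        (Real.exp (C*u) * C * α u + Real.exp (C*u) * (F (-2) (α u) (β u)).1) u := by
      intro u hu
      have he : HasDerivAt (fun u : ℝ => Real.exp (C*u)) (Real.exp (C*u) * C) u := by
        simpa using ((hasDerivAt_id u).const_mul C).exp
      have := he.mul (hsol u (hIJ₀ hu)).2.1
      exact this
    have hmonh : MonotoneOn h (Set.Icc l t₀) := by
      apply monotoneOn_of_deriv_nonneg (convex_Icc l t₀)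
        (fun u hu => (hderh u hu).continuousAt.continuousWithinAt)
      · intro u hu
        rw [interior_Icc] at hu
        exact ((hderh u (Ioo_subset_Icc_self hu)).differentiableAt).differentiableWithinAt
      · intro u hu
        rw [interior_Icc] at hu
        have hu' := Ioo_subset_Icc_self hu
        rw [(hderh u hu').deriv]
        have hx0 : 0 ≤ α u := hnn0 u hu'
        have hxv : α u ≤ v := hant hlm hu' hu'.1
        have hwy : w ≤ β u := hmon hlm hu' hu'.1
        have hCx : 0 ≤ C * α u + (F (-2) (α u) (β u)).1 := by
          rw [hC]; exact key_ineq hx0 hxv hw hwy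
        have hE : (0:ℝ) < Real.exp (C*u) := Real.exp_pos _
        nlinarith [mul_nonneg hE.le hCx]
    have hfin := hmonh hlm ⟨hlt₀.le, le_rfl⟩ hlt₀.le
    simp only [hhdef] at hfin
    have h1 : (0:ℝ) < Real.exp (C*l) * α l := mul_pos (Real.exp_pos _) hαl
    have h2 : Real.exp (C*t₀) * α t₀ ≤ 0 :=
      mul_nonpos_of_nonneg_of_nonpos (Real.exp_pos _).le ht₀0
    linarith
  -- Step 2: conclusions from monotonicity
  have hnn : ∀ u ∈ Set.Icc l t, 0 ≤ α u := fun u hu => (hpos u hu).le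
  obtain ⟨hant, hmon, hsum⟩ := solKey hsol hβ hIJ hnn
  have hlm : l ∈ Set.Icc l t := ⟨le_rfl, hlt⟩
  have htm : t ∈ Set.Icc l t := ⟨hlt, le_rfl⟩
  have hs := hsum hlm htm hlt
  simp only at hs
  exact ⟨(hpos t htm).le, hant hlm htm hlt, hmon hlm htm hlt, by linarith⟩
end

section
/- Let s = 2, and for v > 0 define K₂(v) = {(x,y) ∈ ℝ² : 0 ≤ x ≤ v and x ≤ y ≤ (3/2)x}. If (α, β) is a solution of the system on an interval J with β(t) > 0 for all t ∈ J, and l ∈ J satisfies 0 < α(l) ≤ β(l) ≤ (3/2)α(l), then for every t ∈ J with t ≥ l one has (α(t), β(t)) ∈ K₂(α(l)); that is, 0 ≤ α(t) ≤ α(l) and α(t) ≤ β(t) ≤ (3/2)α(t). -/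
open Real Filter Set Topology
open scoped ENNReal

/-- Sign preservation for scalar linear ODEs `f' = μ f`. -/
lemma sign_preserved (f μ : ℝ → ℝ) (a b : ℝ)
    (hd : ∀ x ∈ Set.Icc a b, HasDerivAt f (μ x * f x) x)
    (hμ : ∀ x ∈ Set.Icc a b, ContinuousAt μ x)
    (hfa : 0 ≤ f a) : ∀ x ∈ Set.Icc a b, 0 ≤ f x := by
  intro t₀ ht₀
  by_contra hneg
  push_neg at hneg
  have hcont : ∀ x ∈ Set.Icc a b, ContinuousAt f x := fun x hx => (hd x hx).continuousAt
  set S : Set ℝ := {x ∈ Set.Icc a t₀ | 0 ≤ f x} with hS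
  have haS : a ∈ S := ⟨⟨le_rfl, ht₀.1⟩, hfa⟩
  have hSbdd : BddAbove S := ⟨t₀, fun x hx => hx.1.2⟩
  set c := sSup S with hc
  have hac : a ≤ c := le_csSup hSbdd haS
  have hct : c ≤ t₀ := csSup_le ⟨a, haS⟩ fun x hx => hx.1.2
  have hcmem : c ∈ Set.Icc a b := ⟨hac, le_trans hct ht₀.2⟩
  have hfc_nonneg : 0 ≤ f c := by
    obtain ⟨u, hu_mono, hu_tend, hu_mem⟩ := exists_seq_tendsto_sSup ⟨a, haS⟩ hSbdd
    have : Filter.Tendsto (fun n => f (u n)) atTop (nhds (f c)) :=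
      ((hcont c hcmem).tendsto).comp hu_tend
    exact ge_of_tendsto this (Filter.Eventually.of_forall fun n => (hu_mem n).2)
  have hclt : c < t₀ := lt_of_le_of_ne hct (fun h => by rw [h] at hfc_nonneg; linarith)
  have hneg' : ∀ x ∈ Set.Ioc c t₀, f x ≤ 0 := by
    intro x hx
    by_contra h
    push_neg at h
    have hxS : x ∈ S := ⟨⟨le_trans hac hx.1.le, hx.2⟩, h.le⟩
    exact absurd (le_csSup hSbdd hxS) (not_le.mpr hx.1)
  have hfc_le : f c ≤ 0 := by
    have h1 : Tendsto f (nhdsWithin c (Set.Ioi c)) (nhds (f c)) :=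
      ((hcont c hcmem).tendsto).mono_left nhdsWithin_le_nhds
    refine le_of_tendsto h1 ?_
    filter_upwards [Ioc_mem_nhdsGT_of_mem ⟨le_rfl, hclt⟩] with x hx
    exact hneg' x hx
  have hfc : f c = 0 := le_antisymm hfc_le hfc_nonneg
  obtain ⟨K, hK⟩ : ∃ K, ∀ x ∈ Set.Icc a b, ‖μ x‖ ≤ K :=
    isCompact_Icc.exists_bound_of_continuousOn
      (fun x hx => (hμ x hx).continuousWithinAt)
  have hsub : Set.Icc c t₀ ⊆ Set.Icc a b := Set.Icc_subset_Icc hac ht₀.2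
  have hgron := norm_le_gronwallBound_of_norm_deriv_right_le
    (f := f) (f' := fun x => μ x * f x) (δ := 0) (K := K) (ε := 0) (a := c) (b := t₀)
    (fun x hx => (hcont x (hsub hx)).continuousWithinAt)
    (fun x hx => ((hd x (hsub (Set.Ico_subset_Icc_self hx))).hasDerivWithinAt))
    (by simp [hfc])
    (by
      intro x hx
      have hx' := hsub (Set.Ico_subset_Icc_self hx)
      rw [add_zero, norm_mul]
      exact mul_le_mul_of_nonneg_right (hK x hx') (norm_nonneg _))
  have h2 := hgron t₀ ⟨hclt.le, le_rfl⟩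
  rw [gronwallBound_ε0] at h2
  simp at h2
  have : ‖f t₀‖ > 0 := by simp [abs_pos]; linarith
  linarith

/-- For `s = 2`, the sets `K₂(v)` trap the solutions: if `0 < α(l) ≤ β(l) ≤ (3/2)α(l)`,
then the solution stays in `K₂(α(l))` for all later times. -/
theorem trapped_in_K2 (J : Set ℝ) (hJ : J.OrdConnected) (α β : ℝ → ℝ)
    (hsol : IsSolutionOn 2 α β J) (hβ : ∀ t ∈ J, 0 < β t)
    (l : ℝ) (hl : l ∈ J) (hαl : 0 < α l) (h1 : α l ≤ β l) (h2 : β l ≤ (3/2) * α l) :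
    ∀ t ∈ J, l ≤ t →
      0 ≤ α t ∧ α t ≤ α l ∧ α t ≤ β t ∧ β t ≤ (3/2) * α t := by
  intro t ht hlt
  have hIcc : Set.Icc l t ⊆ J := hJ.out hl ht
  -- basic facts on Icc l t
  have hY : ∀ x ∈ Set.Icc l t, 0 < β x := fun x hx => hβ x (hIcc hx)
  have hYne : ∀ x ∈ Set.Icc l t, β x ≠ 0 := fun x hx => (hY x hx).ne'
  have hdα : ∀ x ∈ Set.Icc l t, HasDerivAt α (F 2 (α x) (β x)).1 x :=
    fun x hx => (hsol x (hIcc hx)).2.1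
  have hdβ : ∀ x ∈ Set.Icc l t, HasDerivAt β (F 2 (α x) (β x)).2 x :=
    fun x hx => (hsol x (hIcc hx)).2.2
  have hcα : ∀ x ∈ Set.Icc l t, ContinuousAt α x := fun x hx => (hdα x hx).continuousAt
  have hcβ : ∀ x ∈ Set.Icc l t, ContinuousAt β x := fun x hx => (hdβ x hx).continuousAt
  -- the coefficient functions
  set μ₁ : ℝ → ℝ := fun x => (-(9/32)*(α x)^2 + (1/2)*(α x)*(β x) - (1/4)*(β x)^2)/(β x)^4 with hμ₁
  set μ₂ : ℝ → ℝ := fun x => -((α x)*(9*(α x)-4*(β x)))/(32*(β x)^4) with hμ₂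
  set μ₃ : ℝ → ℝ := fun x => -((α x)*(9*(α x)-8*(β x)))/(32*(β x)^4) with hμ₃
  have hcμ₁ : ∀ x ∈ Set.Icc l t, ContinuousAt μ₁ x := by
    intro x hx
    have hA := hcα x hx; have hB := hcβ x hx
    exact ContinuousAt.div (by fun_prop) (by fun_prop) (pow_ne_zero _ (hYne x hx))
  have hcμ₂ : ∀ x ∈ Set.Icc l t, ContinuousAt μ₂ x := by
    intro x hx
    have hA := hcα x hx; have hB := hcβ x hx
    exact ContinuousAt.div (by fun_prop) (by fun_prop)
      (mul_ne_zero (by norm_num) (pow_ne_zero _ (hYne x hx)))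
  have hcμ₃ : ∀ x ∈ Set.Icc l t, ContinuousAt μ₃ x := by
    intro x hx
    have hA := hcα x hx; have hB := hcβ x hx
    exact ContinuousAt.div (by fun_prop) (by fun_prop)
      (mul_ne_zero (by norm_num) (pow_ne_zero _ (hYne x hx)))
  -- derivative identities
  have hdα' : ∀ x ∈ Set.Icc l t, HasDerivAt α (μ₁ x * α x) x := by
    intro x hx
    have h := hdα x hx
    convert h using 1
    have hy := hYne x hx
    simp only [hμ₁, F]
    field_simp
    ring
  have hdw : ∀ x ∈ Set.Icc l t,
      HasDerivAt (fun x => β x - α x) (μ₂ x * (β x - α x)) x := by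
    intro x hx
    have h : HasDerivAt (fun x => β x - α x) _ x := (hdβ x hx).sub (hdα x hx)
    convert h using 1
    have hy := hYne x hx
    simp only [hμ₂, F]
    field_simp
    ring
  have hdz : ∀ x ∈ Set.Icc l t,
      HasDerivAt (fun x => (3/2) * α x - β x) (μ₃ x * ((3/2) * α x - β x)) x := by
    intro x hx
    have h : HasDerivAt (fun x => (3/2) * α x - β x) _ x :=
      ((hdα x hx).const_mul (3/2:ℝ)).sub (hdβ x hx)
    convert h using 1
    have hy := hYne x hx
    simp only [hμ₃, F]
    field_simp
    ring
  -- sign preservation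
  have hxmem : t ∈ Set.Icc l t := ⟨hlt, le_rfl⟩
  have hα_nonneg : ∀ x ∈ Set.Icc l t, 0 ≤ α x :=
    sign_preserved α μ₁ l t hdα' hcμ₁ hαl.le
  have hw_nonneg := sign_preserved (fun x => β x - α x) μ₂ l t hdw hcμ₂
    (by simp; linarith) t hxmem
  have hz_nonneg := sign_preserved (fun x => (3/2) * α x - β x) μ₃ l t hdz hcμ₃
    (by simp; linarith) t hxmem
  -- α is antitone
  have hanti : AntitoneOn α (Set.Icc l t) := by
    apply antitoneOn_of_deriv_nonpos (convex_Icc l t)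
    · exact fun x hx => (hcα x hx).continuousWithinAt
    · intro x hx
      rw [interior_Icc] at hx
      exact ((hdα x (Set.Ioo_subset_Icc_self hx)).differentiableAt).differentiableWithinAt
    · intro x hx
      rw [interior_Icc] at hx
      have hx' := Set.Ioo_subset_Icc_self hx
      rw [(hdα' x hx').deriv]
      apply mul_nonpos_of_nonpos_of_nonneg _ (hα_nonneg x hx')
      apply div_nonpos_of_nonpos_of_nonneg _ (by positivity)
      nlinarith [sq_nonneg (9 * α x - 8 * β x), sq_nonneg (β x)]
  refine ⟨hα_nonneg t hxmem, hanti ⟨le_rfl, hlt⟩ hxmem hlt, by linarith, by linarith⟩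
end

section
/- Let s = 2, and for 0 < w < v define K₃(v,w) = {(x,y) ∈ ℝ² : 0 ≤ x ≤ v and (w/v)x ≤ y ≤ x}. If (α, β) is a solution of the system on an interval J with β(t) > 0 for all t ∈ J, and l ∈ J satisfies 0 < β(l) ≤ α(l), then for every t ∈ J with t ≥ l one has (α(t), β(t)) ∈ K₃(α(l), β(l)); that is, 0 ≤ α(t) ≤ α(l) and (β(l)/α(l))·α(t) ≤ β(t) ≤ α(t). -/
open Real Filter Set Topology
open scoped ENNReal

lemma lin_ode_eq {f c : ℝ → ℝ} (hc : Continuous c) {l t : ℝ} (hlt : l ≤ t)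
    (hf : ∀ s ∈ Set.Icc l t, HasDerivAt f (c s * f s) s) :
    f t = f l * Real.exp (∫ x in l..t, c x) := by
  set C : ℝ → ℝ := fun s => ∫ x in l..s, c x with hCdef
  have hC : ∀ s : ℝ, HasDerivAt C (c s) s := fun s =>
    (hc.integral_hasStrictDerivAt l s).hasDerivAt
  set g : ℝ → ℝ := fun s => f s * Real.exp (-(C s)) with hgdef
  have hg : ∀ s ∈ Set.Icc l t, HasDerivAt g 0 s := by
    intro s hs
    have h : HasDerivAt (fun y => f y * Real.exp (-(C y))) (c s * f s * Real.exp (-(C s)) + f s * (Real.exp (-(C s)) * -(c s))) s := (hf s hs).mul ((hC s).neg.exp)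
    convert h using 1
    ring
  have hconst := constant_of_has_deriv_right_zero
    (f := g) (a := l) (b := t)
    (fun s hs => (hg s hs).continuousAt.continuousWithinAt)
    (fun s hs => (hg s ⟨hs.1, hs.2.le⟩).hasDerivWithinAt)
  have h1 : g t = g l := hconst t ⟨hlt, le_refl t⟩
  have hCl : C l = 0 := intervalIntegral.integral_same
  simp only [hgdef, hCl, neg_zero, Real.exp_zero, mul_one] at h1
  have hne : Real.exp (-(C t)) ≠ 0 := Real.exp_ne_zero _
  have : f t = f l * Real.exp (C t) := by
    rw [← h1, Real.exp_neg]
    field_simp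
  exact this

lemma lin_ode_eq' {f c : ℝ → ℝ} {l t : ℝ} (hlt : l ≤ t)
    (hc : ContinuousOn c (Set.Icc l t))
    (hf : ∀ s ∈ Set.Icc l t, HasDerivAt f (c s * f s) s) :
    ∃ E : ℝ, f t = f l * Real.exp E := by
  set c' : ℝ → ℝ := fun x => c ((Set.projIcc l t hlt x : Set.Icc l t) : ℝ) with hc'def
  have hcc : Continuous c' :=
    hc.comp_continuous (continuous_subtype_val.comp continuous_projIcc)
      (fun x => (Set.projIcc l t hlt x).2)
  have heq : ∀ s ∈ Set.Icc l t, c' s = c s := by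
    intro s hs
    simp [hc'def, Set.projIcc_of_mem hlt hs]
  refine ⟨∫ x in l..t, c' x, ?_⟩
  exact lin_ode_eq hcc hlt (fun s hs => (heq s hs) ▸ hf s hs)

/-- For `s = 2`, the sets `K₃(v,w)` (for `0 < w < v`, here with `w ≤ v`) trap the
solutions: if `0 < β(l) ≤ α(l)`, the solution stays in `K₃(α(l), β(l))` afterwards. -/
theorem trapped_in_K3 (J : Set ℝ) (hJ : J.OrdConnected) (α β : ℝ → ℝ)
    (hsol : IsSolutionOn 2 α β J) (hβ : ∀ t ∈ J, 0 < β t)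
    (l : ℝ) (hl : l ∈ J) (hβl : 0 < β l) (hβα : β l ≤ α l) :
    ∀ t ∈ J, l ≤ t →
      0 ≤ α t ∧ α t ≤ α l ∧ (β l / α l) * α t ≤ β t ∧ β t ≤ α t := by
  intro t ht hlt
  have hsub : Set.Icc l t ⊆ J := hJ.out hl ht
  have hβpos : ∀ s ∈ Set.Icc l t, 0 < β s := fun s hs => hβ s (hsub hs)
  have hβne : ∀ s ∈ Set.Icc l t, β s ≠ 0 := fun s hs => (hβpos s hs).ne'
  have hαl : 0 < α l := lt_of_lt_of_le hβl hβα
  have hαc : ContinuousOn α (Set.Icc l t) :=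
    fun s hs => ((hsol s (hsub hs)).2.1).continuousAt.continuousWithinAt
  have hβc : ContinuousOn β (Set.Icc l t) :=
    fun s hs => ((hsol s (hsub hs)).2.2).continuousAt.continuousWithinAt
  -- c₁ : coefficient for α
  set c₁ : ℝ → ℝ := fun s => (-9*(α s)^2 + 16*(α s)*(β s) - 8*(β s)^2) / (32*(β s)^4) with hc₁def
  have hc₁cont : ContinuousOn c₁ (Set.Icc l t) := by
    apply ContinuousOn.div
    · exact ((continuousOn_const.mul (hαc.pow 2)).add
        ((continuousOn_const.mul hαc).mul hβc)).sub (continuousOn_const.mul (hβc.pow 2))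
    · exact continuousOn_const.mul (hβc.pow 4)
    · intro s hs
      have := hβne s hs
      positivity
  have hα1 : ∀ s ∈ Set.Icc l t, HasDerivAt α (c₁ s * α s) s := by
    intro s hs
    have h := (hsol s (hsub hs)).2.1
    have hy := hβne s hs
    convert h using 1
    simp only [F, hc₁def]
    field_simp
    ring
  have hαpos : ∀ s ∈ Set.Icc l t, 0 < α s := by
    intro s hs
    obtain ⟨E, hE⟩ := lin_ode_eq' hs.1 (hc₁cont.mono (Set.Icc_subset_Icc_right hs.2))
      (fun r hr => hα1 r ⟨hr.1, hr.2.trans hs.2⟩)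
    rw [hE]
    exact mul_pos hαl (Real.exp_pos E)
  -- c₁ nonpositive
  have hc₁nonpos : ∀ s ∈ Set.Icc l t, c₁ s ≤ 0 := by
    intro s hs
    have hy := hβpos s hs
    apply div_nonpos_of_nonpos_of_nonneg
    · nlinarith [sq_nonneg (3*(α s) - (8/3)*(β s)), sq_nonneg (β s)]
    · positivity
  -- v = α/β - 1
  set dd : ℝ → ℝ := fun s => -(α s * (3*(α s) - 2*(β s))) / (8*(β s)^4) with hdddef
  set v : ℝ → ℝ := fun s => α s / β s - 1 with hvdef
  have hddcont : ContinuousOn dd (Set.Icc l t) := by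
    apply ContinuousOn.div
    · exact (hαc.mul ((continuousOn_const.mul hαc).sub (continuousOn_const.mul hβc))).neg
    · exact continuousOn_const.mul (hβc.pow 4)
    · intro s hs
      have := hβne s hs
      positivity
  have hv1 : ∀ s ∈ Set.Icc l t, HasDerivAt v (dd s * v s) s := by
    intro s hs
    have h : HasDerivAt (fun y => α y / β y - 1) _ s := (((hsol s (hsub hs)).2.1).div ((hsol s (hsub hs)).2.2) (hβne s hs)).sub_const 1
    have hy := hβne s hs
    convert h using 1
    simp only [F, hdddef, hvdef]
    field_simp
    ring
  have hvnonneg : ∀ s ∈ Set.Icc l t, 0 ≤ v s := by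
    intro s hs
    obtain ⟨E, hE⟩ := lin_ode_eq' hs.1 (hddcont.mono (Set.Icc_subset_Icc_right hs.2))
      (fun r hr => hv1 r ⟨hr.1, hr.2.trans hs.2⟩)
    rw [hE]
    have hvl : 0 ≤ v l := by
      simp only [hvdef]
      rw [sub_nonneg, le_div_iff₀ hβl]
      linarith
    exact mul_nonneg hvl (Real.exp_pos E).le
  have hβα' : ∀ s ∈ Set.Icc l t, β s ≤ α s := by
    intro s hs
    have h := hvnonneg s hs
    simp only [hvdef, sub_nonneg] at h
    exact (one_le_div (hβpos s hs)).mp h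
  -- u = α/β antitone
  set u : ℝ → ℝ := fun s => α s / β s with hudef
  have hu1 : ∀ s ∈ Set.Icc l t, HasDerivAt u (dd s * v s) s := by
    intro s hs
    have h := (hv1 s hs).add_const 1
    simpa [hvdef, hudef] using h
  have huanti : AntitoneOn u (Set.Icc l t) := by
    apply antitoneOn_of_deriv_nonpos (convex_Icc l t)
    · exact hαc.div hβc hβne
    · intro s hs
      rw [interior_Icc] at hs
      exact (hu1 s (Set.Ioo_subset_Icc_self hs)).differentiableAt.differentiableWithinAt
    · intro s hs
      rw [interior_Icc] at hs
      have hs' := Set.Ioo_subset_Icc_self hs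
      rw [(hu1 s hs').deriv]
      have hdd : dd s ≤ 0 := by
        apply div_nonpos_of_nonpos_of_nonneg
        · have h1 := hαpos s hs'
          have h2 := hβα' s hs'
          nlinarith
        · have := hβpos s hs'
          positivity
      exact mul_nonpos_of_nonpos_of_nonneg hdd (hvnonneg s hs')
  -- α antitone
  have hαanti : AntitoneOn α (Set.Icc l t) := by
    apply antitoneOn_of_deriv_nonpos (convex_Icc l t) hαc
    · intro s hs
      rw [interior_Icc] at hs
      exact (hα1 s (Set.Ioo_subset_Icc_self hs)).differentiableAt.differentiableWithinAt
    · intro s hs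
      rw [interior_Icc] at hs
      have hs' := Set.Ioo_subset_Icc_self hs
      rw [(hα1 s hs').deriv]
      exact mul_nonpos_of_nonpos_of_nonneg (hc₁nonpos s hs') (hαpos s hs').le
  have htmem : t ∈ Set.Icc l t := ⟨hlt, le_refl t⟩
  have hlmem : l ∈ Set.Icc l t := ⟨le_refl l, hlt⟩
  refine ⟨(hαpos t htmem).le, hαanti hlmem htmem hlt, ?_, hβα' t htmem⟩
  have hu : u t ≤ u l := huanti hlmem htmem hlt
  simp only [hudef] at hu
  rw [div_le_div_iff₀ (hβpos t htmem) hβl] at hu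
  rw [div_mul_eq_mul_div, div_le_iff₀ hαl]
  nlinarith
end

section
/- Let s = −2 and ε > 0. Then the maximal solution (α, β) of the system with initial conditions α(0) = ε, β(0) = 1 is defined on all of [0, ∞); moreover α(t) → 0 as t → ∞, and there exists β_∞ > 0 such that β(t) → β_∞ as t → ∞. (This is the ODE content of Theorem 1 in the case aλ = −2: the Berger sphere collapses to its base S² for every fiber length ε.) -/
open Real Filter Set Topology
open scoped ENNReal

/-- The interval `[0, T)` as a subset of `ℝ`, where `T ∈ (0,∞]`. -/
def domainUpTo (T : ℝ≥0∞) : Set ℝ := {t : ℝ | 0 ≤ t ∧ ENNReal.ofReal t < T}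

/-- `(α, β)` is a maximal solution on `[0, T)`: it is a solution there and cannot be
extended to a solution on a strictly larger interval to the right. -/
def IsMaxSolution (s : ℝ) (α β : ℝ → ℝ) (T : ℝ≥0∞) : Prop :=
  0 < T ∧ IsSolutionOn s α β (domainUpTo T) ∧
    ¬ ∃ (T' : ℝ≥0∞) (α' β' : ℝ → ℝ), T < T' ∧ IsSolutionOn s α' β' (domainUpTo T') ∧
        ∀ t ∈ domainUpTo T, α' t = α t ∧ β' t = β t

lemma F_fst (x y : ℝ) : (F (-2) x y).1
    = -((9/32) * x^3 / y^4) - (1/2) * x^2 / y^3 - (1/4) * x / y^2 := by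
  simp only [F]; ring

lemma F_snd (x y : ℝ) : (F (-2) x y).2 = (3/32) * x^2 / y^3 + (1/8) * x / y^2 := by
  simp only [F]; ring

lemma FL_nonpos {x y : ℝ} (hx : 0 ≤ x) (hy : 0 < y) :
    (F (-2) x y).1 + (F (-2) x y).2 / 2 ≤ 0 := by
  rw [F_fst, F_snd]
  have h1 : 0 ≤ (9/32) * x^3 / y^4 := by positivity
  have h2 : 0 ≤ (29/64) * x^2 / y^3 := by positivity
  have h3 : 0 ≤ (3/16) * x / y^2 := by positivity
  have e : -((9/32) * x^3 / y^4) - (1/2) * x^2 / y^3 - (1/4) * x / y^2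
      + ((3/32) * x^2 / y^3 + (1/8) * x / y^2) / 2
      = -((9/32) * x^3 / y^4) - (29/64) * x^2 / y^3 - (3/16) * x / y^2 := by ring
  rw [e]; linarith

lemma F1_abs_le {x y ε : ℝ} (hx0 : 0 ≤ x) (hxε : x ≤ ε) (hy : 1 ≤ y) :
    |(F (-2) x y).1| ≤ ((9/32)*ε^2 + (1/2)*ε + 1/4) * |x| := by
  have hy0 : (0:ℝ) < y := lt_of_lt_of_le one_pos hy
  have hy4 : (1:ℝ) ≤ y^4 := one_le_pow₀ hy
  have hy3 : (1:ℝ) ≤ y^3 := one_le_pow₀ hy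
  have hy2 : (1:ℝ) ≤ y^2 := one_le_pow₀ hy
  have d1 : x^3/y^4 ≤ x^3 := div_le_self (by positivity) hy4
  have d2 : x^2/y^3 ≤ x^2 := div_le_self (by positivity) hy3
  have d3 : x/y^2 ≤ x := div_le_self hx0 hy2
  have p1 : x^3 ≤ ε^2 * x := by nlinarith [sq_nonneg x, mul_le_mul_of_nonneg_right hxε hx0, mul_le_mul_of_nonneg_left hxε hx0]
  have p2 : x^2 ≤ ε * x := by nlinarith
  rw [F_fst, abs_of_nonneg hx0, abs_of_nonpos (by
    have h1 : 0 ≤ (9/32) * x^3 / y^4 := by positivity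
    have h2 : 0 ≤ (1/2) * x^2 / y^3 := by positivity
    have h3 : 0 ≤ (1/4) * x / y^2 := by positivity
    linarith)]
  have e1 : (9:ℝ)/32 * x^3 / y^4 = (9/32) * (x^3/y^4) := by ring
  have e2 : (1:ℝ)/2 * x^2 / y^3 = (1/2) * (x^2/y^3) := by ring
  have e3 : (1:ℝ)/4 * x / y^2 = (1/4) * (x/y^2) := by ring
  nlinarith [d1, d2, d3, p1, p2]

lemma F1_le_neg {x y L B : ℝ} (hL : 0 < L) (hLx : L ≤ x) (hy : 0 < y) (hyB : y ≤ B) :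
    (F (-2) x y).1 ≤ -(L/(4*B^2)) := by
  have hB : 0 < B := lt_of_lt_of_le hy hyB
  have hx0 : 0 ≤ x := le_trans hL.le hLx
  have h1 : 0 ≤ (9/32) * x^3 / y^4 := by positivity
  have h2 : 0 ≤ (1/2) * x^2 / y^3 := by positivity
  have key : L/B^2 ≤ x/y^2 := by
    rw [div_le_div_iff₀ (by positivity) (by positivity)]
    have hyB2 : y^2 ≤ B^2 := by nlinarith
    nlinarith [mul_le_mul_of_nonneg_left hyB2 hL.le, mul_le_mul_of_nonneg_right hLx (sq_nonneg B)]
  rw [F_fst]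
  have e : -(L/(4*B^2)) = -(1/4) * (L/B^2) := by ring
  rw [e]
  have : (1:ℝ)/4 * x / y^2 = (1/4) * (x/y^2) := by ring
  nlinarith

lemma vf_contDiffAt {p : ℝ × ℝ} (hp : p.2 ≠ 0) :
    ContDiffAt ℝ 1 (fun q : ℝ × ℝ => F (-2) q.1 q.2) p := by
  have h2 : ∀ n : ℕ, ContDiffAt ℝ 1 (fun q : ℝ × ℝ => q.2 ^ n) p :=
    fun n => (contDiff_snd.pow n).contDiffAt
  have h1 : ∀ n : ℕ, ContDiffAt ℝ 1 (fun q : ℝ × ℝ => q.1 ^ n) p :=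
    fun n => (contDiff_fst.pow n).contDiffAt
  have hne : ∀ n : ℕ, (p.2 : ℝ) ^ n ≠ 0 := fun n => pow_ne_zero n hp
  have hid : ContDiffAt ℝ 1 (fun q : ℝ × ℝ => q.1) p := contDiff_fst.contDiffAt
  simp only [F]
  apply ContDiffAt.prodMk
  · exact ((((contDiffAt_const (c := -(9/32))).mul (h1 3)).div (h2 4) (hne 4)).add
      (((contDiffAt_const (c := (-2:ℝ)/4)).mul (h1 2)).div (h2 3) (hne 3))).sub
      (((contDiffAt_const (c := (1:ℝ)/4)).mul hid).div (h2 2) (hne 2))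
  · exact ((((contDiffAt_const (c := (3:ℝ)/32)).mul (h1 2)).div (h2 3) (hne 3))).sub
      (((contDiffAt_const (c := (-2:ℝ)/16)).mul hid).div (h2 2) (hne 2))

lemma bounds_on_Icc {α β : ℝ → ℝ} {ε b : ℝ} (hε : 0 < ε) (hb : 0 ≤ b)
    (hα0 : α 0 = ε) (hβ0 : β 0 = 1)
    (hdα : ∀ t ∈ Icc 0 b, HasDerivAt α (F (-2) (α t) (β t)).1 t)
    (hdβ : ∀ t ∈ Icc 0 b, HasDerivAt β (F (-2) (α t) (β t)).2 t)
    (hαnn : ∀ t ∈ Icc 0 b, 0 ≤ α t) (hβpos : ∀ t ∈ Icc 0 b, 0 < β t) :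
    MonotoneOn β (Icc 0 b) ∧ AntitoneOn α (Icc 0 b) ∧
      ∀ t ∈ Icc 0 b, α t ≤ ε ∧ 1 ≤ β t ∧ β t ≤ 1 + 2*ε := by
  have h0mem : (0:ℝ) ∈ Icc 0 b := ⟨le_refl 0, hb⟩
  have hintsub : interior (Icc (0:ℝ) b) ⊆ Icc 0 b := interior_subset
  have hcβ : ContinuousOn β (Icc 0 b) :=
    fun t ht => (hdβ t ht).continuousAt.continuousWithinAt
  have hcα : ContinuousOn α (Icc 0 b) :=
    fun t ht => (hdα t ht).continuousAt.continuousWithinAt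
  have monoβ : MonotoneOn β (Icc 0 b) := by
    apply monotoneOn_of_deriv_nonneg (convex_Icc 0 b) hcβ
    · exact fun t ht => (hdβ t (hintsub ht)).differentiableAt.differentiableWithinAt
    · intro t ht
      rw [(hdβ t (hintsub ht)).deriv]
      exact F2_nonneg (hαnn t (hintsub ht)) (hβpos t (hintsub ht))
  have hβ1 : ∀ t ∈ Icc 0 b, 1 ≤ β t := by
    intro t ht
    have := monoβ h0mem ht ht.1
    rwa [hβ0] at this
  have antα : AntitoneOn α (Icc 0 b) := by
    apply antitoneOn_of_deriv_nonpos (convex_Icc 0 b) hcα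
    · exact fun t ht => (hdα t (hintsub ht)).differentiableAt.differentiableWithinAt
    · intro t ht
      rw [(hdα t (hintsub ht)).deriv]
      exact F1_nonpos (hαnn t (hintsub ht)) (hβpos t (hintsub ht))
  refine ⟨monoβ, antα, fun t ht => ?_⟩
  -- Lyapunov function
  have antL : AntitoneOn (fun t => α t + β t / 2) (Icc 0 b) := by
    apply antitoneOn_of_deriv_nonpos (convex_Icc 0 b) (hcα.add (hcβ.div_const 2))
    · exact fun u hu => ((hdα u (hintsub hu)).add
        ((hdβ u (hintsub hu)).div_const 2)).differentiableAt.differentiableWithinAt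
    · intro u hu
      rw [((hdα u (hintsub hu)).add ((hdβ u (hintsub hu)).div_const 2)).deriv]
      exact FL_nonpos (hαnn u (hintsub hu)) (hβpos u (hintsub hu))
  have hL := antL h0mem ht ht.1
  simp only [hα0, hβ0] at hL
  have h1 := hβ1 t ht
  have h0 := hαnn t ht
  exact ⟨by linarith, h1, by linarith⟩

lemma sol_facts {T : ℝ≥0∞} {α β : ℝ → ℝ} {ε : ℝ} (hε : 0 < ε)
    (hsol : IsSolutionOn (-2) α β (domainUpTo T)) (hα0 : α 0 = ε) (hβ0 : β 0 = 1) :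
    ∀ t ∈ domainUpTo T, (0 < α t ∧ α t ≤ ε ∧ 1 ≤ β t ∧ β t ≤ 1 + 2*ε) ∧
      ∀ u ∈ domainUpTo T, t ≤ u → α u ≤ α t ∧ β t ≤ β u := by
  set J := domainUpTo T with hJdef
  have hmem : ∀ t ∈ J, Icc 0 t ⊆ J := by
    intro t ht u hu
    exact ⟨hu.1, lt_of_le_of_lt (ENNReal.ofReal_le_ofReal hu.2) ht.2⟩
  -- β is positive on J
  have hβpos : ∀ t ∈ J, 0 < β t := by
    intro t ht
    rcases lt_or_gt_of_ne (hsol t ht).1 with hneg | hpos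
    · exfalso
      have hcont : ContinuousOn β (Icc 0 t) :=
        fun u hu => (hsol u (hmem t ht hu)).2.2.continuousAt.continuousWithinAt
      have : (0:ℝ) ∈ Icc (β t) (β 0) := by rw [hβ0]; exact ⟨hneg.le, zero_le_one⟩
      obtain ⟨c, hc, hc0⟩ := intermediate_value_Icc' ht.1 hcont this
      exact (hsol c (hmem t ht hc)).1 hc0
    · exact hpos
  -- α is positive on J
  have hαpos : ∀ t ∈ J, 0 < α t := by
    intro t₁ ht₁
    by_contra hcon
    push_neg at hcon
    have hcontα : ContinuousOn α (Icc 0 t₁) :=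
      fun u hu => (hsol u (hmem t₁ ht₁ hu)).2.1.continuousAt.continuousWithinAt
    -- find a zero of α
    have hz : ∃ c ∈ Icc 0 t₁, α c = 0 := by
      rcases eq_or_lt_of_le hcon with heq | hlt
      · exact ⟨t₁, ⟨ht₁.1, le_refl _⟩, heq⟩
      · have : (0:ℝ) ∈ Icc (α t₁) (α 0) := by rw [hα0]; exact ⟨hlt.le, hε.le⟩
        obtain ⟨c, hc, hc0⟩ := intermediate_value_Icc' ht₁.1 hcontα this
        exact ⟨c, hc, hc0⟩
    set S : Set ℝ := {u ∈ Icc 0 t₁ | α u = 0} with hSdef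
    have hSne : S.Nonempty := by obtain ⟨c, hc, h0⟩ := hz; exact ⟨c, hc, h0⟩
    have hSbdd : BddBelow S := ⟨0, fun u hu => hu.1.1⟩
    set t₀ := sInf S with ht₀def
    have ht₀cl : t₀ ∈ closure S := csInf_mem_closure hSne hSbdd
    have hScc : closure S ⊆ Icc 0 t₁ :=
      closure_minimal (fun u hu => hu.1) isClosed_Icc
    have ht₀Icc : t₀ ∈ Icc 0 t₁ := hScc ht₀cl
    have ht₀J : t₀ ∈ J := hmem t₁ ht₁ ht₀Icc
    have ht₀zero : α t₀ = 0 := by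
      have hcw : ContinuousWithinAt α S t₀ :=
        (hcontα t₀ ht₀Icc).mono (fun u hu => hu.1)
      have := hcw.mem_closure_image ht₀cl
      have himg : α '' S ⊆ {0} := by rintro _ ⟨u, hu, rfl⟩; exact hu.2
      have : α t₀ ∈ closure ({0} : Set ℝ) := closure_mono himg this
      simpa using this
    have ht₀pos : 0 < t₀ := by
      rcases eq_or_lt_of_le ht₀Icc.1 with h | h
      · exfalso; rw [← h] at ht₀zero; rw [hα0] at ht₀zero; linarith
      · exact h
    -- α > 0 on [0, t₀)
    have hpos_before : ∀ u ∈ Ico 0 t₀, 0 < α u := by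
      intro u hu
      by_contra hc
      push_neg at hc
      have huIcc : u ∈ Icc 0 t₁ := ⟨hu.1, le_trans hu.2.le ht₀Icc.2⟩
      rcases eq_or_lt_of_le hc with heq | hlt
      · have : u ∈ S := ⟨huIcc, heq⟩
        exact absurd (csInf_le hSbdd this) (not_le.2 hu.2)
      · have : (0:ℝ) ∈ Icc (α u) (α 0) := by rw [hα0]; exact ⟨hlt.le, hε.le⟩
        obtain ⟨c, hc2, hc0⟩ := intermediate_value_Icc' hu.1 (hcontα.mono
          (Icc_subset_Icc (le_refl _) huIcc.2)) this
        have : c ∈ S := ⟨⟨hc2.1, le_trans hc2.2 huIcc.2⟩, hc0⟩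
        exact absurd (csInf_le hSbdd this) (not_le.2 (lt_of_le_of_lt hc2.2 hu.2))
    have hαnn : ∀ u ∈ Icc 0 t₀, 0 ≤ α u := by
      intro u hu
      rcases eq_or_lt_of_le hu.2 with h | h
      · rw [h, ht₀zero]
      · exact (hpos_before u ⟨hu.1, h⟩).le
    have hIccJ : Icc 0 t₀ ⊆ J := hmem t₀ ht₀J
    have hdα : ∀ u ∈ Icc 0 t₀, HasDerivAt α (F (-2) (α u) (β u)).1 u :=
      fun u hu => (hsol u (hIccJ hu)).2.1
    have hdβ : ∀ u ∈ Icc 0 t₀, HasDerivAt β (F (-2) (α u) (β u)).2 u :=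
      fun u hu => (hsol u (hIccJ hu)).2.2
    obtain ⟨_, _, hbnds⟩ := bounds_on_Icc hε ht₀Icc.1 hα0 hβ0 hdα hdβ hαnn
      (fun u hu => hβpos u (hIccJ hu))
    -- Gronwall, time-reversed
    set M : ℝ := (9/32)*ε^2 + (1/2)*ε + 1/4 with hMdef
    set f : ℝ → ℝ := fun u => α (t₀ - u) with hfdef
    have hrev : ∀ u ∈ Icc 0 t₀, t₀ - u ∈ Icc 0 t₀ := by
      intro u hu; constructor <;> [linarith [hu.2]; linarith [hu.1]]
    have hfc : ContinuousOn f (Icc 0 t₀) := by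
      intro u hu
      have h1 : ContinuousAt α (t₀ - u) := (hdα _ (hrev u hu)).continuousAt
      exact (h1.comp ((continuous_const.sub continuous_id).continuousAt)).continuousWithinAt
    have hfd : ∀ u ∈ Ico 0 t₀, HasDerivWithinAt f
        (-(F (-2) (α (t₀ - u)) (β (t₀ - u))).1) (Ici u) u := by
      intro u hu
      have h1 : HasDerivAt (fun v : ℝ => t₀ - v) (0 - 1) u :=
        (hasDerivAt_const u t₀).sub (hasDerivAt_id u)
      have h2 := (hdα (t₀ - u) (hrev u ⟨hu.1, hu.2.le⟩)).comp u h1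
      have : HasDerivAt f ((F (-2) (α (t₀ - u)) (β (t₀ - u))).1 * (0 - 1)) u := h2
      simpa using this.hasDerivWithinAt
    have hf0 : ‖f 0‖ ≤ 0 := by
      simp only [hfdef, sub_zero, ht₀zero, norm_zero, le_refl]
    have hbound : ∀ u ∈ Ico 0 t₀,
        ‖-(F (-2) (α (t₀ - u)) (β (t₀ - u))).1‖ ≤ M * ‖f u‖ + 0 := by
      intro u hu
      have hmem' := hrev u ⟨hu.1, hu.2.le⟩
      have hb := hbnds (t₀ - u) hmem'
      rw [norm_neg, Real.norm_eq_abs, Real.norm_eq_abs, add_zero]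
      exact F1_abs_le (hαnn _ hmem') hb.1 hb.2.1
    have := norm_le_gronwallBound_of_norm_deriv_right_le hfc hfd hf0 hbound t₀
      ⟨ht₀pos.le, le_refl _⟩
    rw [gronwallBound_ε0_δ0] at this
    simp only [hfdef, sub_self, hα0, Real.norm_eq_abs, abs_of_pos hε] at this
    linarith
  -- now the conclusion
  intro t ht
  have hsub := hmem t ht
  have htIcc : t ∈ Icc 0 t := ⟨ht.1, le_refl t⟩
  obtain ⟨_, _, hbnds⟩ := bounds_on_Icc hε ht.1 hα0 hβ0
    (fun u hu => (hsol u (hsub hu)).2.1) (fun u hu => (hsol u (hsub hu)).2.2)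
    (fun u hu => (hαpos u (hsub hu)).le) (fun u hu => hβpos u (hsub hu))
  refine ⟨⟨hαpos t ht, (hbnds t htIcc).1, (hbnds t htIcc).2.1, (hbnds t htIcc).2.2⟩, ?_⟩
  intro u hu htu
  have hsubu := hmem u hu
  obtain ⟨monoβ, antα, _⟩ := bounds_on_Icc hε hu.1 hα0 hβ0
    (fun v hv => (hsol v (hsubu hv)).2.1) (fun v hv => (hsol v (hsubu hv)).2.2)
    (fun v hv => (hαpos v (hsubu hv)).le) (fun v hv => hβpos v (hsubu hv))
  have htIccu : t ∈ Icc 0 u := ⟨ht.1, htu⟩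
  have huIccu : u ∈ Icc 0 u := ⟨hu.1, le_refl u⟩
  exact ⟨antα htIccu huIccu htu, monoβ htIccu huIccu htu⟩

lemma limits_at_top {α β : ℝ → ℝ} {ε : ℝ} (hε : 0 < ε)
    (hsol : IsSolutionOn (-2) α β (domainUpTo ⊤)) (hα0 : α 0 = ε) (hβ0 : β 0 = 1) :
    Tendsto α atTop (𝓝 0) ∧ ∃ βinf : ℝ, 0 < βinf ∧ Tendsto β atTop (𝓝 βinf) := by
  have hJ : ∀ t : ℝ, 0 ≤ t → t ∈ domainUpTo ⊤ := by
    intro t ht; exact ⟨ht, by simp [ENNReal.ofReal_lt_top]⟩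
  have facts := sol_facts hε hsol hα0 hβ0
  -- auxiliary globalized functions
  set A : ℝ → ℝ := fun t => α (max t 0) with hA
  set B : ℝ → ℝ := fun t => β (max t 0) with hB
  have hmaxmem : ∀ t : ℝ, max t 0 ∈ domainUpTo ⊤ := fun t => hJ _ (le_max_right t 0)
  have hAeq : α =ᶠ[atTop] A := by
    filter_upwards [eventually_ge_atTop (0:ℝ)] with t ht
    simp [hA, max_eq_left ht]
  have hBeq : β =ᶠ[atTop] B := by
    filter_upwards [eventually_ge_atTop (0:ℝ)] with t ht
    simp [hB, max_eq_left ht]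
  have hAanti : Antitone A := by
    intro t u htu
    exact ((facts _ (hmaxmem t)).2 _ (hmaxmem u) (max_le_max htu (le_refl 0))).1
  have hBmono : Monotone B := by
    intro t u htu
    exact ((facts _ (hmaxmem t)).2 _ (hmaxmem u) (max_le_max htu (le_refl 0))).2
  have hAbdd : BddBelow (range A) := by
    refine ⟨0, ?_⟩
    rintro _ ⟨t, rfl⟩
    exact ((facts _ (hmaxmem t)).1.1).le
  have hBbdd : BddAbove (range B) := by
    refine ⟨1 + 2*ε, ?_⟩
    rintro _ ⟨t, rfl⟩
    exact (facts _ (hmaxmem t)).1.2.2.2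
  have hαtend : Tendsto A atTop (𝓝 (⨅ t, A t)) := tendsto_atTop_ciInf hAanti hAbdd
  have hβtend : Tendsto B atTop (𝓝 (⨆ t, B t)) := tendsto_atTop_ciSup hBmono hBbdd
  set L := ⨅ t, A t with hL
  have hL0 : 0 ≤ L := le_ciInf (fun t => ((facts _ (hmaxmem t)).1.1).le)
  -- show L = 0
  have hLzero : L = 0 := by
    by_contra hne
    have hLpos : 0 < L := lt_of_le_of_ne hL0 (Ne.symm hne)
    have hLle : ∀ t : ℝ, 0 ≤ t → L ≤ α t := by
      intro t ht
      have h := ciInf_le hAbdd t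
      have he : A t = α t := by simp [hA, max_eq_left ht]
      rw [he] at h
      exact h
    set c := L / (4*(1+2*ε)^2) with hc
    have hcpos : 0 < c := by positivity
    -- φ := α + c * t is antitone on [0, ∞)
    have hφanti : AntitoneOn (fun t => α t + c * t) (Ici 0) := by
      apply antitoneOn_of_deriv_nonpos (convex_Ici 0)
      · intro t ht
        exact ((hsol t (hJ t ht)).2.1.continuousAt.add
          ((continuous_const.mul continuous_id).continuousAt)).continuousWithinAt
      · intro t ht
        rw [interior_Ici] at ht
        exact ((hsol t (hJ t (le_of_lt ht))).2.1.add
          ((hasDerivAt_id t).const_mul c)).differentiableAt.differentiableWithinAt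
      · intro t ht
        rw [interior_Ici] at ht
        have hd : HasDerivAt (fun t => α t + c * t) ((F (-2) (α t) (β t)).1 + c * 1) t :=
          (hsol t (hJ t (le_of_lt ht))).2.1.add ((hasDerivAt_id t).const_mul c)
        rw [hd.deriv]
        have hf := (facts t (hJ t ht.le)).1
        have := F1_le_neg hLpos (hLle t ht.le) (lt_of_lt_of_le one_pos hf.2.2.1) hf.2.2.2
        rw [hc] at *
        linarith
    have ht1 : (0:ℝ) ≤ (ε+1)/c := by positivity
    have hkey := hφanti (self_mem_Ici) ht1 ht1
    simp only at hkey
    rw [hα0, mul_comm c 0, zero_mul, add_zero, mul_comm,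
      div_mul_cancel₀ _ (ne_of_gt hcpos)] at hkey
    have hpos := (facts _ (hJ _ ht1)).1.1
    linarith [hkey]
  refine ⟨?_, ⟨⨆ t, B t, ?_, ?_⟩⟩
  · rw [← hLzero]
    exact Tendsto.congr' hAeq.symm hαtend
  · have h1 : (1:ℝ) ≤ B 0 := by
      have := (facts _ (hmaxmem 0)).1.2.2.1
      simpa [hB] using this
    calc (0:ℝ) < 1 := one_pos
    _ ≤ B 0 := h1
    _ ≤ ⨆ t, B t := le_ciSup hBbdd 0
  · exact Tendsto.congr' hBeq.symm hβtend

lemma extend_if_finite {T : ℝ≥0∞} {α β : ℝ → ℝ} {ε : ℝ} (hε : 0 < ε)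
    (hT0 : 0 < T) (hTne : T ≠ ⊤)
    (hsol : IsSolutionOn (-2) α β (domainUpTo T)) (hα0 : α 0 = ε) (hβ0 : β 0 = 1) :
    ∃ (T' : ℝ≥0∞) (A B : ℝ → ℝ), T < T' ∧ IsSolutionOn (-2) A B (domainUpTo T') ∧
      ∀ t ∈ domainUpTo T, A t = α t ∧ B t = β t := by
  set T₀ := T.toReal with hT₀def
  have hT₀pos : 0 < T₀ := ENNReal.toReal_pos hT0.ne' hTne
  have hJ : ∀ t : ℝ, t ∈ domainUpTo T ↔ (0 ≤ t ∧ t < T₀) := by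
    intro t
    constructor
    · rintro ⟨h0, hlt⟩
      exact ⟨h0, (ENNReal.ofReal_lt_iff_lt_toReal h0 hTne).1 hlt⟩
    · rintro ⟨h0, hlt⟩
      exact ⟨h0, (ENNReal.ofReal_lt_iff_lt_toReal h0 hTne).2 hlt⟩
  have facts := sol_facts hε hsol hα0 hβ0
  have hne : (Ioo (0:ℝ) T₀).Nonempty := ⟨T₀/2, by constructor <;> linarith⟩
  have hJmem : ∀ t ∈ Ioo (0:ℝ) T₀, t ∈ domainUpTo T := fun t ht => (hJ t).2 ⟨ht.1.le, ht.2⟩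
  have hanti : AntitoneOn α (Ioo 0 T₀) :=
    fun t ht u hu htu => ((facts t (hJmem t ht)).2 u (hJmem u hu) htu).1
  have hmono : MonotoneOn β (Ioo 0 T₀) :=
    fun t ht u hu htu => ((facts t (hJmem t ht)).2 u (hJmem u hu) htu).2
  have hbddα : BddBelow (α '' Ioo 0 T₀) := by
    refine ⟨0, ?_⟩; rintro _ ⟨u, hu, rfl⟩
    exact ((facts u (hJmem u hu)).1.1).le
  have hbddβ : BddAbove (β '' Ioo 0 T₀) := by
    refine ⟨1 + 2*ε, ?_⟩; rintro _ ⟨u, hu, rfl⟩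
    exact (facts u (hJmem u hu)).1.2.2.2
  set αT := sInf (α '' Ioo 0 T₀) with hαTdef
  set βT := sSup (β '' Ioo 0 T₀) with hβTdef
  have tendα : Tendsto α (𝓝[<] T₀) (𝓝 αT) :=
    hanti.tendsto_nhdsWithin_Ioo_left hne hbddα
  have tendβ : Tendsto β (𝓝[<] T₀) (𝓝 βT) :=
    hmono.tendsto_nhdsWithin_Ioo_left hne hbddβ
  have hw : T₀/2 ∈ Ioo (0:ℝ) T₀ := ⟨by linarith, by linarith⟩
  have hβT1 : 1 ≤ βT :=
    le_trans (facts _ (hJmem _ hw)).1.2.2.1 (le_csSup hbddβ ⟨_, hw, rfl⟩)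
  -- Picard-Lindelöf local solution at (αT, βT)
  have hcd : ContDiffAt ℝ 1 (fun q : ℝ × ℝ => F (-2) q.1 q.2) (αT, βT) :=
    vf_contDiffAt (by simp; linarith)
  obtain ⟨g, hg0, δ, hδpos, hgd⟩ := hcd.exists_forall_mem_closedBall_exists_eq_forall_mem_Ioo_hasDerivAt₀ T₀
  have hT₀mem : T₀ ∈ Ioo (T₀ - δ) (T₀ + δ) := ⟨by linarith, by linarith⟩
  have hgc : ContinuousAt (fun t => (g t).2) T₀ :=
    continuous_snd.continuousAt.comp (hgd T₀ hT₀mem).continuousAt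
  have hgT2 : (1:ℝ)/2 < (g T₀).2 := by rw [hg0]; simp; linarith
  obtain ⟨r, hr0, hrball⟩ := Metric.mem_nhds_iff.1 (hgc (lt_mem_nhds hgT2))
  set η := min (δ/2) (r/2) with hηdef
  have hηpos : 0 < η := lt_min (by linarith) (by linarith)
  have hηδ : η ≤ δ/2 := min_le_left _ _
  have hηr : η ≤ r/2 := min_le_right _ _
  refine ⟨ENNReal.ofReal (T₀ + η), fun t => if t < T₀ then α t else (g t).1,
    fun t => if t < T₀ then β t else (g t).2, ?_, ?_, ?_⟩
  · -- T < T'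
    conv_lhs => rw [← ENNReal.ofReal_toReal hTne]
    exact (ENNReal.ofReal_lt_ofReal_iff (by linarith)).2 (by linarith)
  · -- solution property
    intro t ht
    set A : ℝ → ℝ := fun t => if t < T₀ then α t else (g t).1 with hA
    set B : ℝ → ℝ := fun t => if t < T₀ then β t else (g t).2 with hB
    have ht0 : 0 ≤ t := ht.1
    have htlt : t < T₀ + η := by
      have h2 := ht.2
      rwa [ENNReal.ofReal_lt_ofReal_iff (by linarith)] at h2
    rcases lt_trichotomy t T₀ with hlt | heq | hgt
    · -- t < T₀ : old solution
      have htJ : t ∈ domainUpTo T := (hJ t).2 ⟨ht0, hlt⟩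
      have hevA : A =ᶠ[𝓝 t] α := by
        filter_upwards [Iio_mem_nhds hlt] with u hu
        exact if_pos hu
      have hevB : B =ᶠ[𝓝 t] β := by
        filter_upwards [Iio_mem_nhds hlt] with u hu
        exact if_pos hu
      have hABeq : A t = α t ∧ B t = β t := ⟨if_pos hlt, if_pos hlt⟩
      refine ⟨?_, ?_, ?_⟩
      · rw [hABeq.2]; exact (hsol t htJ).1
      · rw [hABeq.1, hABeq.2]
        exact ((hsol t htJ).2.1).congr_of_eventuallyEq hevA
      · rw [hABeq.1, hABeq.2]
        exact ((hsol t htJ).2.2).congr_of_eventuallyEq hevB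
    · -- t = T₀ : glue point
      subst heq
      have hAT : A T₀ = αT := by
        rw [hA]; simp only [lt_irrefl, if_false, hg0]
      have hBT : B T₀ = βT := by
        rw [hB]; simp only [lt_irrefl, if_false, hg0]
      have hIooJ : ∀ u ∈ Ioo (0:ℝ) T₀, u ∈ domainUpTo T := hJmem
      have hevA' : ∀ u ∈ Ioo (0:ℝ) T₀, A u = α u := fun u hu => if_pos hu.2
      have hAderivAt : ∀ u ∈ Ioo (0:ℝ) T₀, HasDerivAt A (F (-2) (α u) (β u)).1 u := by
        intro u hu
        have hev : A =ᶠ[𝓝 u] α := by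
          filter_upwards [Iio_mem_nhds hu.2] with w hw
          exact if_pos hw
        exact ((hsol u (hIooJ u hu)).2.1).congr_of_eventuallyEq hev
      have hBderivAt : ∀ u ∈ Ioo (0:ℝ) T₀, HasDerivAt B (F (-2) (α u) (β u)).2 u := by
        intro u hu
        have hev : B =ᶠ[𝓝 u] β := by
          filter_upwards [Iio_mem_nhds hu.2] with w hw
          exact if_pos hw
        exact ((hsol u (hIooJ u hu)).2.2).congr_of_eventuallyEq hev
      have hsmem : Ioo (0:ℝ) T₀ ∈ 𝓝[<] T₀ := Ioo_mem_nhdsLT_of_mem ⟨hT₀pos, le_refl T₀⟩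
      have hpair : Tendsto (fun x => (α x, β x)) (𝓝[<] T₀) (𝓝 (αT, βT)) :=
        tendα.prodMk_nhds tendβ
      have hvf : Tendsto (fun x => F (-2) (α x) (β x)) (𝓝[<] T₀) (𝓝 (F (-2) αT βT)) := by
        have := hcd.continuousAt.tendsto.comp hpair
        exact this
      -- component derivatives of g at T₀
      have hgT := hgd T₀ hT₀mem
      have hfstg : HasDerivAt (fun u => (g u).1) (F (-2) αT βT).1 T₀ := by
        have h2 := (ContinuousLinearMap.fst ℝ ℝ ℝ).hasFDerivAt.comp_hasDerivAt T₀ hgT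
        have h3 : (fun u => (g u).1) = (ContinuousLinearMap.fst ℝ ℝ ℝ) ∘ g := rfl
        rw [h3]
        rw [hg0] at h2
        exact h2
      have hsndg : HasDerivAt (fun u => (g u).2) (F (-2) αT βT).2 T₀ := by
        have h2 := (ContinuousLinearMap.snd ℝ ℝ ℝ).hasFDerivAt.comp_hasDerivAt T₀ hgT
        have h3 : (fun u => (g u).2) = (ContinuousLinearMap.snd ℝ ℝ ℝ) ∘ g := rfl
        rw [h3]
        rw [hg0] at h2
        exact h2
      have hrightA : HasDerivWithinAt A (F (-2) αT βT).1 (Ici T₀) T₀ := by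
        refine (hfstg.hasDerivWithinAt).congr ?_ ?_
        · intro u hu; exact if_neg (not_lt.2 hu)
        · exact if_neg (lt_irrefl T₀)
      have hrightB : HasDerivWithinAt B (F (-2) αT βT).2 (Ici T₀) T₀ := by
        refine (hsndg.hasDerivWithinAt).congr ?_ ?_
        · intro u hu; exact if_neg (not_lt.2 hu)
        · exact if_neg (lt_irrefl T₀)
      have hleftA : HasDerivWithinAt A (F (-2) αT βT).1 (Iic T₀) T₀ := by
        apply hasDerivWithinAt_Iic_of_tendsto_deriv
          (fun u hu => (hAderivAt u hu).differentiableAt.differentiableWithinAt)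
          ?_ hsmem ?_
        · show Tendsto A (𝓝[Ioo (0:ℝ) T₀] T₀) (𝓝 (A T₀))
          rw [hAT]
          apply Tendsto.congr' _ (tendα.mono_left (nhdsWithin_mono _ Ioo_subset_Iio_self))
          filter_upwards [self_mem_nhdsWithin] with u hu
          exact (hevA' u hu).symm
        · apply Tendsto.congr' _ ((continuous_fst.continuousAt.tendsto).comp hvf)
          filter_upwards [hsmem] with u hu
          exact ((hAderivAt u hu).deriv).symm
      have hleftB : HasDerivWithinAt B (F (-2) αT βT).2 (Iic T₀) T₀ := by
        apply hasDerivWithinAt_Iic_of_tendsto_deriv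
          (fun u hu => (hBderivAt u hu).differentiableAt.differentiableWithinAt)
          ?_ hsmem ?_
        · show Tendsto B (𝓝[Ioo (0:ℝ) T₀] T₀) (𝓝 (B T₀))
          rw [hBT]
          apply Tendsto.congr' _ (tendβ.mono_left (nhdsWithin_mono _ Ioo_subset_Iio_self))
          filter_upwards [self_mem_nhdsWithin] with u hu
          exact (if_pos hu.2).symm
        · apply Tendsto.congr' _ ((continuous_snd.continuousAt.tendsto).comp hvf)
          filter_upwards [hsmem] with u hu
          exact ((hBderivAt u hu).deriv).symm
      have hAd : HasDerivAt A (F (-2) αT βT).1 T₀ := by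
        have h2 := hleftA.union hrightA
        rwa [Iic_union_Ici, hasDerivWithinAt_univ] at h2
      have hBd : HasDerivAt B (F (-2) αT βT).2 T₀ := by
        have h2 := hleftB.union hrightB
        rwa [Iic_union_Ici, hasDerivWithinAt_univ] at h2
      refine ⟨by rw [hBT]; linarith, ?_, ?_⟩
      · rw [hAT, hBT]; exact hAd
      · rw [hAT, hBT]; exact hBd
    · -- t > T₀ : new solution from g
      have htIoo : t ∈ Ioo (T₀ - δ) (T₀ + δ) := ⟨by linarith, by linarith⟩
      have hb2 : (1:ℝ)/2 < (g t).2 := by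
        apply hrball
        rw [Metric.mem_ball, Real.dist_eq, abs_of_pos (by linarith)]
        linarith
      have hABg : A t = (g t).1 ∧ B t = (g t).2 :=
        ⟨if_neg (not_lt.2 hgt.le), if_neg (not_lt.2 hgt.le)⟩
      have hevA : A =ᶠ[𝓝 t] (fun u => (g u).1) := by
        filter_upwards [Ioi_mem_nhds hgt] with u hu
        exact if_neg (not_lt.2 hu.le)
      have hevB : B =ᶠ[𝓝 t] (fun u => (g u).2) := by
        filter_upwards [Ioi_mem_nhds hgt] with u hu
        exact if_neg (not_lt.2 hu.le)
      have hgt' := hgd t htIoo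
      have hfstg : HasDerivAt (fun u => (g u).1) (F (-2) (g t).1 (g t).2).1 t := by
        have h2 := (ContinuousLinearMap.fst ℝ ℝ ℝ).hasFDerivAt.comp_hasDerivAt t hgt'
        exact h2
      have hsndg : HasDerivAt (fun u => (g u).2) (F (-2) (g t).1 (g t).2).2 t := by
        have h2 := (ContinuousLinearMap.snd ℝ ℝ ℝ).hasFDerivAt.comp_hasDerivAt t hgt'
        exact h2
      refine ⟨?_, ?_, ?_⟩
      · rw [hABg.2]; linarith
      · rw [hABg.1, hABg.2]
        exact hfstg.congr_of_eventuallyEq hevA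
      · rw [hABg.1, hABg.2]
        exact hsndg.congr_of_eventuallyEq hevB
  · -- agreement with old solution
    intro u hu
    have hlt : u < T₀ := ((hJ u).1 hu).2
    exact ⟨if_pos hlt, if_pos hlt⟩


/-- For `s = -2` and any `ε > 0`, the maximal solution with `α(0) = ε`, `β(0) = 1`
exists for all time, `α(t) → 0`, and `β(t) → β_∞ > 0` as `t → ∞`. -/
theorem collapse_s_neg_two (ε : ℝ) (hε : 0 < ε) (α β : ℝ → ℝ) (T : ℝ≥0∞)
    (hmax : IsMaxSolution (-2) α β T) (hα0 : α 0 = ε) (hβ0 : β 0 = 1) :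
    T = ⊤ ∧ Tendsto α atTop (𝓝 0) ∧
      ∃ βinf : ℝ, 0 < βinf ∧ Tendsto β atTop (𝓝 βinf) := by
  obtain ⟨hT0, hsol, hnotext⟩ := hmax
  have hTtop : T = ⊤ := by
    by_contra hne
    exact hnotext (extend_if_finite hε hT0 hne hsol hα0 hβ0)
  subst hTtop
  obtain ⟨h1, h2⟩ := limits_at_top hε hsol hα0 hβ0
  exact ⟨rfl, h1, h2⟩
end

section
/- Let s = 2 and 0 < ε < 2/3. Then the maximal solution (α, β) of the system with initial conditions α(0) = ε, β(0) = 1 is defined on all of [0, ∞); moreover α(t) → 0 as t → ∞, and there exists β_∞ > 0 such that β(t) → β_∞ as t → ∞. (This is the ODE content of Theorem 1 in the case aλ = 2 with sufficiently short fibers: the Berger sphere collapses to its base S².) -/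
open Real Filter Set Topology
open scoped ENNReal

lemma bsEcons {a b : ℝ → ℝ} {t : ℝ} (hb0 : b t ≠ 0) (hba : b t - a t ≠ 0)
    (ha : HasDerivAt a (F 2 (a t) (b t)).1 t)
    (hb : HasDerivAt b (F 2 (a t) (b t)).2 t) :
    HasDerivAt (fun u => (b u)^3 * (2 * b u - 3 * a u)^2 / (b u - a u)) 0 t := by
  simp only [F] at ha hb
  have H := (((hb.pow 3).mul (((hb.const_mul 2).sub (ha.const_mul 3)).pow 2)).div
    (hb.sub ha) hba)
  refine H.congr_deriv ?_
  simp only [Pi.pow_apply, Pi.mul_apply, Pi.sub_apply, Pi.div_apply]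
  field_simp
  ring

lemma bs_beta_pos {β : ℝ → ℝ} {c : ℝ} (hβ0 : β 0 = 1)
    (hcont : ContinuousOn β (Icc 0 c)) (hne : ∀ t ∈ Icc 0 c, β t ≠ 0) :
    ∀ t ∈ Icc 0 c, 0 < β t := by
  intro t ht
  rcases lt_or_ge 0 (β t) with h | h
  · exact h
  exfalso
  have hlt : β t < 0 := lt_of_le_of_ne h (hne t ht)
  have hsub : Icc 0 t ⊆ Icc 0 c := Icc_subset_Icc le_rfl ht.2
  have hmem : (0:ℝ) ∈ Icc (β t) (β 0) := by rw [hβ0]; constructor <;> linarith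
  obtain ⟨u, hu, hu0⟩ := intermediate_value_Icc' ht.1 (hcont.mono hsub) hmem
  exact hne u (hsub hu) hu0

/-- E constancy given closed region bounds. -/
lemma bs_Econst {α β : ℝ → ℝ} {d : ℝ} (hd : 0 ≤ d)
    (hsol : ∀ t ∈ Icc 0 d, β t ≠ 0 ∧ HasDerivAt α (F 2 (α t) (β t)).1 t ∧
      HasDerivAt β (F 2 (α t) (β t)).2 t)
    (hreg : ∀ t ∈ Icc 0 d, 0 < β t ∧ 3 * α t ≤ 2 * β t) :
    ∀ t ∈ Icc 0 d,
      (β t)^3 * (2 * β t - 3 * α t)^2 / (β t - α t)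
        = (β 0)^3 * (2 * β 0 - 3 * α 0)^2 / (β 0 - α 0) := by
  have hne : ∀ t ∈ Icc 0 d, β t - α t ≠ 0 := by
    intro t ht
    have h1 := (hreg t ht).1
    have h2 := (hreg t ht).2
    nlinarith
  have hder : ∀ t ∈ Icc 0 d,
      HasDerivAt (fun u => (β u)^3 * (2 * β u - 3 * α u)^2 / (β u - α u)) 0 t := by
    intro t ht
    exact bsEcons (hsol t ht).1 (hne t ht) (hsol t ht).2.1 (hsol t ht).2.2
  intro t ht
  exact constant_of_has_deriv_right_zero
    (fun u hu => ((hder u hu).continuousAt).continuousWithinAt)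
    (fun u hu => ((hder u (Ico_subset_Icc_self hu)).hasDerivWithinAt)) t ht

lemma bs_E_le {A B : ℝ} (hA : 0 ≤ A) (h3 : 3*A ≤ 2*B) (hB : 0 < B) :
    B^3 * (2*B - 3*A)^2 / (B - A) ≤ 12 * B^4 := by
  have hBA : B/3 ≤ B - A := by linarith
  have h1 : B^3 * (2*B - 3*A)^2 ≤ B^3 * (2*B)^2 := by
    have hB3 : (0:ℝ) ≤ B^3 := by positivity
    have h2 : (2*B - 3*A)^2 ≤ (2*B)^2 := by nlinarith
    exact mul_le_mul_of_nonneg_left h2 hB3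
  calc B^3 * (2*B - 3*A)^2 / (B - A) ≤ B^3 * (2*B)^2 / (B/3) :=
        div_le_div₀ (by positivity) h1 (by positivity) hBA
    _ = 12 * B^4 := by field_simp; ring

/-- β is antitone given the region bounds. -/
lemma bs_beta_anti {α β : ℝ → ℝ} {d : ℝ}
    (hsol : ∀ t ∈ Icc 0 d, β t ≠ 0 ∧ HasDerivAt α (F 2 (α t) (β t)).1 t ∧
      HasDerivAt β (F 2 (α t) (β t)).2 t)
    (hreg : ∀ t ∈ Icc 0 d, 0 ≤ α t ∧ 3 * α t ≤ 2 * β t ∧ 0 < β t) :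
    AntitoneOn β (Icc 0 d) := by
  apply antitoneOn_of_deriv_nonpos (convex_Icc 0 d)
  · exact fun u hu => ((hsol u hu).2.2).continuousAt.continuousWithinAt
  · intro u hu
    rw [interior_Icc] at hu
    exact ((hsol u (Ioo_subset_Icc_self hu)).2.2).differentiableAt.differentiableWithinAt
  · intro u hu
    rw [interior_Icc] at hu
    have hu' : u ∈ Icc 0 d := Ioo_subset_Icc_self hu
    rw [((hsol u hu').2.2).deriv]
    obtain ⟨hA, h3, hB⟩ := hreg u hu'
    simp only [F]
    have heq : (3:ℝ)/32 * (α u)^2 / (β u)^3 - 2/16 * (α u) / (β u)^2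
        = ((3/32) * (α u)^2 - (1/8) * (α u) * (β u)) / (β u)^3 := by
      field_simp; ring
    rw [heq]
    apply div_nonpos_of_nonpos_of_nonneg _ (by positivity)
    nlinarith

/-- α is antitone given the region bounds. -/
lemma bs_alpha_anti {α β : ℝ → ℝ} {d : ℝ}
    (hsol : ∀ t ∈ Icc 0 d, β t ≠ 0 ∧ HasDerivAt α (F 2 (α t) (β t)).1 t ∧
      HasDerivAt β (F 2 (α t) (β t)).2 t)
    (hreg : ∀ t ∈ Icc 0 d, 0 ≤ α t ∧ 3 * α t ≤ 2 * β t ∧ 0 < β t) :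
    AntitoneOn α (Icc 0 d) := by
  apply antitoneOn_of_deriv_nonpos (convex_Icc 0 d)
  · exact fun u hu => ((hsol u hu).2.1).continuousAt.continuousWithinAt
  · intro u hu
    rw [interior_Icc] at hu
    exact ((hsol u (Ioo_subset_Icc_self hu)).2.1).differentiableAt.differentiableWithinAt
  · intro u hu
    rw [interior_Icc] at hu
    have hu' : u ∈ Icc 0 d := Ioo_subset_Icc_self hu
    rw [((hsol u hu').2.1).deriv]
    obtain ⟨hA, h3, hB⟩ := hreg u hu'
    simp only [F]
    have heq : -(9/32) * (α u)^3 / (β u)^4 + 2/4 * (α u)^2 / (β u)^3 - 1/4 * (α u) / (β u)^2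
        = (-(9/32) * (α u)^3 + (1/2) * (α u)^2 * (β u) - (1/4) * (α u) * (β u)^2) / (β u)^4 := by
      field_simp; ring
    rw [heq]
    apply div_nonpos_of_nonpos_of_nonneg _ (by positivity)
    nlinarith [sq_nonneg (9 * α u - 8 * β u), mul_nonneg hA (sq_nonneg (9 * α u - 8 * β u))]

/-- Exponential lower bound: α stays positive. -/
lemma bs_alpha_pos {α β : ℝ → ℝ} {d ε C : ℝ} (hd : 0 ≤ d) (hα0 : α 0 = ε)
    (hε0 : 0 < ε) (hC : 0 < C)
    (hsol : ∀ t ∈ Icc 0 d, β t ≠ 0 ∧ HasDerivAt α (F 2 (α t) (β t)).1 t ∧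
      HasDerivAt β (F 2 (α t) (β t)).2 t)
    (hreg : ∀ t ∈ Icc 0 d, 0 ≤ α t ∧ 3 * α t ≤ 2 * β t ∧ 0 < β t ∧ β t ≤ 1 ∧
      1 / C ≤ (β t)^4) :
    0 < α d := by
  set φ : ℝ → ℝ := fun t => α t * Real.exp (C * t) with hφdef
  have hder : ∀ t ∈ Icc 0 d, HasDerivAt φ
      ((F 2 (α t) (β t)).1 * Real.exp (C * t) + α t * (Real.exp (C * t) * C)) t := by
    intro t ht
    have hlin : HasDerivAt (fun x : ℝ => C * x) C t := by
      simpa using (hasDerivAt_id t).const_mul C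
    exact ((hsol t ht).2.1).mul hlin.exp
  have hmono : MonotoneOn φ (Icc 0 d) := by
    apply monotoneOn_of_deriv_nonneg (convex_Icc 0 d)
    · exact fun u hu => ((hder u hu).continuousAt).continuousWithinAt
    · intro u hu
      rw [interior_Icc] at hu
      exact (hder u (Ioo_subset_Icc_self hu)).differentiableAt.differentiableWithinAt
    · intro u hu
      rw [interior_Icc] at hu
      have hu' : u ∈ Icc 0 d := Ioo_subset_Icc_self hu
      rw [(hder u hu').deriv]
      obtain ⟨hA, h3, hB, hB1, hB4⟩ := hreg u hu'
      simp only [F]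
      have hkey : 0 ≤ -(9/32) * (α u)^3 / (β u)^4 + 2/4 * (α u)^2 / (β u)^3
          - 1/4 * (α u) / (β u)^2 + α u * C := by
        have heq : -(9/32) * (α u)^3 / (β u)^4 + 2/4 * (α u)^2 / (β u)^3
            - 1/4 * (α u) / (β u)^2 + α u * C
            = (-(9/32) * (α u)^3 + (1/2) * (α u)^2 * (β u) - (1/4) * (α u) * (β u)^2
              + (α u) * C * (β u)^4) / (β u)^4 := by
          field_simp; ring
        rw [heq]
        apply div_nonneg _ (by positivity)
        have hCB : 1 ≤ C * (β u)^4 := by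
          rw [div_le_iff₀ hC] at hB4; nlinarith
        have hACB : α u ≤ α u * (C * (β u)^4) := le_mul_of_one_le_right hA hCB
        nlinarith [mul_nonneg hA hB.le, mul_nonneg (mul_nonneg hA hA) hB.le,
          mul_nonneg hA (sq_nonneg (β u)), sq_nonneg (β u),
          mul_le_mul_of_nonneg_left h3 hA]
      calc (0:ℝ) = 0 * Real.exp (C * u) := by ring
        _ ≤ (-(9/32) * (α u)^3 / (β u)^4 + 2/4 * (α u)^2 / (β u)^3
              - 1/4 * (α u) / (β u)^2 + α u * C) * Real.exp (C * u) :=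
            mul_le_mul_of_nonneg_right hkey (Real.exp_pos _).le
        _ = (-(9/32) * (α u)^3 / (β u)^4 + 2/4 * (α u)^2 / (β u)^3
              - 1/4 * (α u) / (β u)^2) * Real.exp (C * u) + α u * (Real.exp (C * u) * C) := by
            ring
  have h0d : φ 0 ≤ φ d := hmono ⟨le_rfl, hd⟩ ⟨hd, le_rfl⟩ hd
  have hφ0 : φ 0 = ε := by simp [hφdef, hα0]
  have hφd : 0 < φ d := by rw [hφ0] at h0d; linarith
  have hexp : 0 < Real.exp (C * d) := Real.exp_pos _
  have : φ d = α d * Real.exp (C * d) := rfl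
  nlinarith [hφd]

/-- Exponential upper bound for α. -/
lemma bs_exp_decay {α β : ℝ → ℝ} {c ε : ℝ} (hα0 : α 0 = ε)
    (hsol : ∀ t ∈ Icc 0 c, β t ≠ 0 ∧ HasDerivAt α (F 2 (α t) (β t)).1 t ∧
      HasDerivAt β (F 2 (α t) (β t)).2 t)
    (hreg : ∀ t ∈ Icc 0 c, 0 ≤ α t ∧ 3 * α t ≤ 2 * β t ∧ 0 < β t ∧ β t ≤ 1) :
    ∀ t ∈ Icc 0 c, α t ≤ ε * Real.exp (-(t/36)) := by
  set ψ : ℝ → ℝ := fun t => α t * Real.exp (t/36) with hψdef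
  have hder : ∀ t ∈ Icc 0 c, HasDerivAt ψ
      ((F 2 (α t) (β t)).1 * Real.exp (t/36) + α t * (Real.exp (t/36) * (1/36))) t := by
    intro t ht
    have h36 : HasDerivAt (fun x : ℝ => x / 36) (1/36) t := by
      simpa using (hasDerivAt_id t).div_const 36
    exact ((hsol t ht).2.1).mul h36.exp
  have hanti : AntitoneOn ψ (Icc 0 c) := by
    apply antitoneOn_of_deriv_nonpos (convex_Icc 0 c)
    · exact fun u hu => ((hder u hu).continuousAt).continuousWithinAt
    · intro u hu
      rw [interior_Icc] at hu
      exact (hder u (Ioo_subset_Icc_self hu)).differentiableAt.differentiableWithinAt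
    · intro u hu
      rw [interior_Icc] at hu
      have hu' : u ∈ Icc 0 c := Ioo_subset_Icc_self hu
      rw [(hder u hu').deriv]
      obtain ⟨hA, h3, hB, hB1⟩ := hreg u hu'
      simp only [F]
      have hkey : -(9/32) * (α u)^3 / (β u)^4 + 2/4 * (α u)^2 / (β u)^3
          - 1/4 * (α u) / (β u)^2 + α u * (1/36) ≤ 0 := by
        have heq : -(9/32) * (α u)^3 / (β u)^4 + 2/4 * (α u)^2 / (β u)^3
            - 1/4 * (α u) / (β u)^2 + α u * (1/36)
            = (-(9/32) * (α u)^3 + (1/2) * (α u)^2 * (β u) - (1/4) * (α u) * (β u)^2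
              + (α u) * (β u)^4 / 36) / (β u)^4 := by
          field_simp; ring
        rw [heq]
        apply div_nonpos_of_nonpos_of_nonneg _ (by positivity)
        have hB42 : (β u)^4 ≤ (β u)^2 := by
          have h2 : (β u)^2 ≤ 1 := by nlinarith
          calc (β u)^4 = (β u)^2 * (β u)^2 := by ring
            _ ≤ (β u)^2 * 1 := by nlinarith
            _ = (β u)^2 := by ring
        nlinarith [mul_nonneg hA (sq_nonneg (9 * α u - 8 * β u)),
          mul_le_mul_of_nonneg_left hB42 hA]
      calc (F 2 (α u) (β u)).1 * Real.exp (u/36) + α u * (Real.exp (u/36) * (1/36))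
            = (-(9/32) * (α u)^3 / (β u)^4 + 2/4 * (α u)^2 / (β u)^3
              - 1/4 * (α u) / (β u)^2 + α u * (1/36)) * Real.exp (u/36) := by
            simp only [F]; ring
        _ ≤ 0 * Real.exp (u/36) := mul_le_mul_of_nonneg_right hkey (Real.exp_pos _).le
        _ = 0 := by ring
  intro t ht
  have h1 : ψ t ≤ ψ 0 := hanti ⟨le_rfl, ht.1.trans ht.2⟩ ht ht.1
  have hψ0 : ψ 0 = ε := by simp [hψdef, hα0]
  rw [hψ0] at h1
  have hexp : 0 < Real.exp (t/36) := Real.exp_pos _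
  rw [Real.exp_neg]
  rw [show ε * (Real.exp (t/36))⁻¹ = ε / Real.exp (t/36) from by ring]
  rw [le_div_iff₀ hexp]
  exact h1

/-- Main invariance lemma: the solution stays in the good region, with quantitative bounds. -/
lemma bs_invariant {α β : ℝ → ℝ} {ε c : ℝ} (hε0 : 0 < ε) (hε1 : ε < 2/3)
    (hα0 : α 0 = ε) (hβ0 : β 0 = 1) (hc : 0 ≤ c)
    (hsol : ∀ t ∈ Icc 0 c, β t ≠ 0 ∧ HasDerivAt α (F 2 (α t) (β t)).1 t ∧
      HasDerivAt β (F 2 (α t) (β t)).2 t) :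
    ∀ t ∈ Icc 0 c, 0 < α t ∧ 3 * α t < 2 * β t ∧ 0 < β t ∧ β t ≤ 1 ∧
      (2 - 3*ε)^2 / (1 - ε) ≤ 12 * (β t)^4 := by
  set E₀ : ℝ := (2 - 3*ε)^2 / (1 - ε) with hE₀def
  have hE₀pos : 0 < E₀ := by
    apply div_pos
    · nlinarith
    · linarith
  have hβpos : ∀ t ∈ Icc 0 c, 0 < β t :=
    bs_beta_pos hβ0 (fun u hu => ((hsol u hu).2.2).continuousAt.continuousWithinAt)
      (fun u hu => (hsol u hu).1)
  have hg0 : (β 0)^3 * (2 * β 0 - 3 * α 0)^2 / (β 0 - α 0) = E₀ := by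
    rw [hα0, hβ0, hE₀def]; norm_num
  have hP0 : 0 < α 0 ∧ 3 * α 0 < 2 * β 0 := by
    rw [hα0, hβ0]; exact ⟨hε0, by linarith⟩
  set A : Set ℝ := {t | t ∈ Icc 0 c ∧ ∀ u ∈ Icc 0 t, 0 < α u ∧ 3 * α u < 2 * β u} with hAdef
  have h0A : 0 ∈ A := by
    refine ⟨⟨le_rfl, hc⟩, ?_⟩
    intro u hu
    have : u = 0 := le_antisymm hu.2 hu.1
    rw [this]; exact hP0
  have hAne : A.Nonempty := ⟨0, h0A⟩
  have hbdd : BddAbove A := ⟨c, fun x hx => hx.1.2⟩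
  set t₀ : ℝ := sSup A with ht₀def
  have ht₀mem : t₀ ∈ Icc 0 c := ⟨le_csSup hbdd h0A, csSup_le hAne (fun x hx => hx.1.2)⟩
  have hPlt : ∀ u, 0 ≤ u → u < t₀ → 0 < α u ∧ 3 * α u < 2 * β u := by
    intro u hu hult
    obtain ⟨a, haA, hua⟩ := exists_lt_of_lt_csSup hAne hult
    exact haA.2 u ⟨hu, hua.le⟩
  have hsub₀ : Icc 0 t₀ ⊆ Icc 0 c := Icc_subset_Icc le_rfl ht₀mem.2
  -- closed bounds on [0, t₀]
  have hcl : ∀ u ∈ Icc 0 t₀, 0 ≤ α u ∧ 3 * α u ≤ 2 * β u := by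
    intro u hu
    rcases lt_or_eq_of_le hu.2 with h | h
    · obtain ⟨h1, h2⟩ := hPlt u hu.1 h
      exact ⟨h1.le, h2.le⟩
    · have hPltu : ∀ v, 0 ≤ v → v < u → 0 < α v ∧ 3 * α v < 2 * β v :=
        fun v a b => hPlt v a (by rw [← h]; exact b)
      rcases eq_or_lt_of_le hu.1 with h0 | h0
      · rw [← h0]; exact ⟨hP0.1.le, hP0.2.le⟩
      · have hIoo : Ioo 0 u ∈ 𝓝[<] u := Ioo_mem_nhdsLT_of_mem ⟨h0, le_rfl⟩
        have hev : ∀ᶠ v in 𝓝[<] u, 0 ≤ α v ∧ 3 * α v ≤ 2 * β v := by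
          filter_upwards [hIoo] with v hv
          obtain ⟨h1, h2⟩ := hPltu v hv.1.le hv.2
          exact ⟨h1.le, h2.le⟩
        have hcα : Tendsto α (𝓝[<] u) (𝓝 (α u)) :=
          ((hsol u (hsub₀ hu)).2.1).continuousAt.continuousWithinAt
        have hcβ : Tendsto β (𝓝[<] u) (𝓝 (β u)) :=
          ((hsol u (hsub₀ hu)).2.2).continuousAt.continuousWithinAt
        constructor
        · exact ge_of_tendsto hcα (hev.mono fun v hvv => hvv.1)
        · have hcomb : Tendsto (fun v => 2 * β v - 3 * α v) (𝓝[<] u)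
              (𝓝 (2 * β u - 3 * α u)) := ((hcβ.const_mul 2).sub (hcα.const_mul 3))
          have h0le : 0 ≤ 2 * β u - 3 * α u :=
            ge_of_tendsto hcomb (hev.mono fun v hvv => by linarith [hvv.2])
          linarith
  have hreg₀ : ∀ u ∈ Icc 0 t₀, 0 < β u ∧ 3 * α u ≤ 2 * β u :=
    fun u hu => ⟨hβpos u (hsub₀ hu), (hcl u hu).2⟩
  have hsol₀ : ∀ t ∈ Icc 0 t₀, β t ≠ 0 ∧ HasDerivAt α (F 2 (α t) (β t)).1 t ∧
      HasDerivAt β (F 2 (α t) (β t)).2 t := fun t ht => hsol t (hsub₀ ht)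
  have hEconst := bs_Econst ht₀mem.1 hsol₀ hreg₀
  have hE4 : ∀ u ∈ Icc 0 t₀, E₀ ≤ 12 * (β u)^4 := by
    intro u hu
    have h1 : (β u)^3 * (2 * β u - 3 * α u)^2 / (β u - α u) = E₀ := by
      rw [hEconst u hu, hg0]
    rw [← h1]
    exact bs_E_le (hcl u hu).1 (hcl u hu).2 (hβpos u (hsub₀ hu))
  have hreg₀' : ∀ u ∈ Icc 0 t₀, 0 ≤ α u ∧ 3 * α u ≤ 2 * β u ∧ 0 < β u :=
    fun u hu => ⟨(hcl u hu).1, (hcl u hu).2, hβpos u (hsub₀ hu)⟩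
  have hβle1₀ : ∀ u ∈ Icc 0 t₀, β u ≤ 1 := by
    intro u hu
    have := bs_beta_anti hsol₀ hreg₀' ⟨le_rfl, ht₀mem.1⟩ hu hu.1
    rw [hβ0] at this; exact this
  -- α t₀ > 0 via the exponential lower bound
  have hαt₀pos : 0 < α t₀ := by
    apply bs_alpha_pos ht₀mem.1 hα0 hε0 (show (0:ℝ) < 12 / E₀ by positivity) hsol₀
    intro u hu
    refine ⟨(hcl u hu).1, (hcl u hu).2, hβpos u (hsub₀ hu), hβle1₀ u hu, ?_⟩
    have h12 : 1 / (12 / E₀) = E₀ / 12 := by field_simp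
    rw [h12]
    linarith [hE4 u hu]
  -- 3 α t₀ < 2 β t₀
  have h3t₀ : 3 * α t₀ < 2 * β t₀ := by
    rcases lt_or_eq_of_le (hcl t₀ ⟨ht₀mem.1, le_rfl⟩).2 with h | h
    · exact h
    · exfalso
      have hEt₀ : (β t₀)^3 * (2 * β t₀ - 3 * α t₀)^2 / (β t₀ - α t₀) = E₀ := by
        rw [hEconst t₀ ⟨ht₀mem.1, le_rfl⟩, hg0]
      rw [show 2 * β t₀ - 3 * α t₀ = 0 from by linarith] at hEt₀
      simp at hEt₀
      rw [← hEt₀] at hE₀pos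
      simp at hE₀pos
  have ht₀A : t₀ ∈ A := by
    refine ⟨ht₀mem, ?_⟩
    intro u hu
    rcases lt_or_eq_of_le hu.2 with h | h
    · exact hPlt u hu.1 h
    · rw [h]; exact ⟨hαt₀pos, h3t₀⟩
  -- t₀ = c
  have ht₀c : t₀ = c := by
    by_contra hne'
    have hlt : t₀ < c := lt_of_le_of_ne ht₀mem.2 hne'
    have hcα : ContinuousAt α t₀ := ((hsol t₀ (hsub₀ ⟨ht₀mem.1, le_rfl⟩)).2.1).continuousAt
    have hcβ : ContinuousAt β t₀ := ((hsol t₀ (hsub₀ ⟨ht₀mem.1, le_rfl⟩)).2.2).continuousAt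
    have h1 : ∀ᶠ u in 𝓝 t₀, 0 < α u := hcα.eventually (eventually_gt_nhds hαt₀pos)
    have hcomb : ContinuousAt (fun u => 2 * β u - 3 * α u) t₀ :=
      ((continuousAt_const.mul hcβ).sub (continuousAt_const.mul hcα))
    have h2 : ∀ᶠ u in 𝓝 t₀, 0 < 2 * β u - 3 * α u :=
      hcomb.eventually (eventually_gt_nhds (show (0:ℝ) < 2 * β t₀ - 3 * α t₀ by linarith))
    obtain ⟨δ, hδ, hball⟩ := Metric.eventually_nhds_iff.mp (h1.and h2)
    set t₁ : ℝ := min (t₀ + δ/2) c with ht₁def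
    have ht₀t₁ : t₀ < t₁ := lt_min (by linarith) hlt
    have ht₁A : t₁ ∈ A := by
      refine ⟨⟨le_trans ht₀mem.1 ht₀t₁.le, min_le_right _ _⟩, ?_⟩
      intro u hu
      rcases le_or_gt u t₀ with h | h
      · exact ht₀A.2 u ⟨hu.1, h⟩
      · have hu2 : u ≤ t₀ + δ/2 := le_trans hu.2 (min_le_left _ _)
        have hd : dist u t₀ < δ := by
          rw [Real.dist_eq, abs_of_pos (by linarith)]; linarith
        obtain ⟨hh1, hh2⟩ := hball hd
        exact ⟨hh1, by linarith⟩
    exact absurd (le_csSup hbdd ht₁A) (not_le.mpr ht₀t₁)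
  rw [ht₀c] at ht₀A hE4 hβle1₀
  intro t ht
  exact ⟨(ht₀A.2 t ht).1, (ht₀A.2 t ht).2, hβpos t ht, hβle1₀ t ht, hE4 t ht⟩

/-- Gluing a solution with its continuation at the junction point. -/
lemma bs_glue {γ G d : ℝ → ℝ} {T₀ L Gstar : ℝ} (hT₀pos : 0 < T₀)
    (h1 : ∀ u ∈ Ioo (0:ℝ) T₀, HasDerivAt γ (d u) u)
    (h2 : Tendsto γ (𝓝[<] T₀) (𝓝 Gstar))
    (h3 : Tendsto d (𝓝[<] T₀) (𝓝 L))
    (h4 : HasDerivAt G L T₀)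
    (h5 : G T₀ = Gstar) :
    HasDerivAt (fun t => if t < T₀ then γ t else G t) L T₀ := by
  set γe : ℝ → ℝ := fun t => if t < T₀ then γ t else G t with hγe
  have hval : γe T₀ = Gstar := by simp [hγe, lt_irrefl, h5]
  have hIoo : Ioo (0:ℝ) T₀ ∈ 𝓝[<] T₀ := Ioo_mem_nhdsLT_of_mem ⟨hT₀pos, le_rfl⟩
  have hEqOn : ∀ u ∈ Ioo (0:ℝ) T₀, γe u = γ u := fun u hu => if_pos hu.2
  have hEqNhds : ∀ u ∈ Ioo (0:ℝ) T₀, γe =ᶠ[𝓝 u] γ := by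
    intro u hu
    filter_upwards [Iio_mem_nhds hu.2] with w hw
    exact if_pos hw
  have hright : HasDerivWithinAt γe L (Ici T₀) T₀ := by
    apply (h4.hasDerivWithinAt (s := Ici T₀)).congr
    · intro y hy
      simp only [hγe]
      rw [if_neg (not_lt.mpr hy)]
    · simp [hγe, lt_irrefl]
  have hleft : HasDerivWithinAt γe L (Iic T₀) T₀ := by
    apply hasDerivWithinAt_Iic_of_tendsto_deriv (s := Ioo 0 T₀)
    · intro u hu
      exact (((h1 u hu).congr_of_eventuallyEq (hEqNhds u hu)).differentiableAt).differentiableWithinAt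
    · unfold ContinuousWithinAt
      rw [hval]
      apply (h2.mono_left (nhdsWithin_mono _ Ioo_subset_Iio_self)).congr'
      filter_upwards [self_mem_nhdsWithin] with w hw
      exact (hEqOn w hw).symm
    · exact hIoo
    · apply h3.congr'
      filter_upwards [hIoo] with u hu
      rw [← ((h1 u hu).congr_of_eventuallyEq (hEqNhds u hu)).deriv]
  have := hleft.union hright
  rwa [Iic_union_Ici, hasDerivWithinAt_univ] at this

/-- The extension construction: a solution on `[0, T₀)` extends beyond `T₀`. -/
lemma bs_extend {α β : ℝ → ℝ} {ε T₀ : ℝ} (hε0 : 0 < ε) (hε1 : ε < 2/3)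
    (hα0 : α 0 = ε) (hβ0 : β 0 = 1) (hT₀pos : 0 < T₀)
    (hsol : ∀ t ∈ Ico 0 T₀, β t ≠ 0 ∧ HasDerivAt α (F 2 (α t) (β t)).1 t ∧
      HasDerivAt β (F 2 (α t) (β t)).2 t) :
    ∃ δ : ℝ, 0 < δ ∧ ∃ α' β' : ℝ → ℝ,
      (∀ t, 0 ≤ t → t < T₀ + δ → β' t ≠ 0 ∧ HasDerivAt α' (F 2 (α' t) (β' t)).1 t ∧
        HasDerivAt β' (F 2 (α' t) (β' t)).2 t) ∧
      ∀ t, 0 ≤ t → t < T₀ → α' t = α t ∧ β' t = β t := by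
  set E₀ : ℝ := (2 - 3*ε)^2 / (1 - ε) with hE₀def
  have hE₀pos : 0 < E₀ := div_pos (by nlinarith) (by linarith)
  have hsolIcc : ∀ c ∈ Ico (0:ℝ) T₀, ∀ t ∈ Icc 0 c, β t ≠ 0 ∧
      HasDerivAt α (F 2 (α t) (β t)).1 t ∧ HasDerivAt β (F 2 (α t) (β t)).2 t :=
    fun c hc t ht => hsol t ⟨ht.1, lt_of_le_of_lt ht.2 hc.2⟩
  have hfacts : ∀ t ∈ Ico (0:ℝ) T₀, 0 < α t ∧ 3 * α t < 2 * β t ∧ 0 < β t ∧ β t ≤ 1 ∧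
      E₀ ≤ 12 * (β t)^4 := by
    intro t ht
    exact bs_invariant hε0 hε1 hα0 hβ0 ht.1 (hsolIcc t ht) t ⟨ht.1, le_rfl⟩
  -- lower bound for β
  set b : ℝ := (E₀/12) ^ ((1:ℝ)/4) with hbdef
  have hbpos : 0 < b := Real.rpow_pos_of_pos (by positivity) _
  have hb4 : b^4 = E₀/12 := by
    rw [hbdef, ← Real.rpow_natCast ((E₀/12) ^ ((1:ℝ)/4)) 4, ← Real.rpow_mul (by positivity)]
    norm_num
  have hβge : ∀ t ∈ Ico (0:ℝ) T₀, b ≤ β t := by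
    intro t ht
    have h4 : b^4 ≤ (β t)^4 := by rw [hb4]; linarith [(hfacts t ht).2.2.2.2]
    exact le_of_pow_le_pow_left₀ (by norm_num) (hfacts t ht).2.2.1.le h4
  -- antitonicity
  have hreg : ∀ c ∈ Ico (0:ℝ) T₀, ∀ t ∈ Icc 0 c, 0 ≤ α t ∧ 3 * α t ≤ 2 * β t ∧ 0 < β t := by
    intro c hc t ht
    have := hfacts t ⟨ht.1, lt_of_le_of_lt ht.2 hc.2⟩
    exact ⟨this.1.le, this.2.1.le, this.2.2.1⟩
  have hαanti : AntitoneOn α (Ico 0 T₀) := by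
    intro x hx y hy hxy
    exact bs_alpha_anti (hsolIcc y hy) (hreg y hy) ⟨hx.1, hxy⟩ ⟨hy.1, le_rfl⟩ hxy
  have hβanti : AntitoneOn β (Ico 0 T₀) := by
    intro x hx y hy hxy
    exact bs_beta_anti (hsolIcc y hy) (hreg y hy) ⟨hx.1, hxy⟩ ⟨hy.1, le_rfl⟩ hxy
  have hIoone : (Ioo (0:ℝ) T₀).Nonempty := nonempty_Ioo.mpr hT₀pos
  set Astar : ℝ := sInf (α '' Ioo 0 T₀) with hAstardef
  set Bstar : ℝ := sInf (β '' Ioo 0 T₀) with hBstardef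
  have hαtend : Tendsto α (𝓝[<] T₀) (𝓝 Astar) :=
    AntitoneOn.tendsto_nhdsWithin_Ioo_left hIoone (hαanti.mono Ioo_subset_Ico_self)
      ⟨0, by rintro y ⟨u, hu, rfl⟩; exact (hfacts u ⟨hu.1.le, hu.2⟩).1.le⟩
  have hβtend : Tendsto β (𝓝[<] T₀) (𝓝 Bstar) :=
    AntitoneOn.tendsto_nhdsWithin_Ioo_left hIoone (hβanti.mono Ioo_subset_Ico_self)
      ⟨0, by rintro y ⟨u, hu, rfl⟩; exact (hfacts u ⟨hu.1.le, hu.2⟩).2.2.1.le⟩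
  have hBstarb : b ≤ Bstar :=
    le_csInf (hIoone.image β) (by rintro y ⟨u, hu, rfl⟩; exact hβge u ⟨hu.1.le, hu.2⟩)
  have hBstarpos : 0 < Bstar := lt_of_lt_of_le hbpos hBstarb
  -- smoothness of the vector field at the limit point
  set x₀ : ℝ × ℝ := (Astar, Bstar) with hx₀def
  have hsnd : x₀.2 ≠ 0 := ne_of_gt hBstarpos
  have hv : ContDiffAt ℝ 1 (fun p : ℝ × ℝ => F 2 p.1 p.2) x₀ := by
    have h1n : ContDiffAt ℝ 1 (fun p : ℝ × ℝ => p.1) x₀ := contDiffAt_fst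
    have h2n : ContDiffAt ℝ 1 (fun p : ℝ × ℝ => p.2) x₀ := contDiffAt_snd
    have hq : ∀ k : ℕ, ContDiffAt ℝ 1 (fun p : ℝ × ℝ => p.2 ^ k) x₀ := fun k => h2n.pow k
    have hqne : ∀ k : ℕ, x₀.2 ^ k ≠ 0 := fun k => pow_ne_zero k hsnd
    simp only [F]
    apply ContDiffAt.prodMk
    · exact (((contDiffAt_const.mul (h1n.pow 3)).div (hq 4) (hqne 4)).add
        ((contDiffAt_const.mul (h1n.pow 2)).div (hq 3) (hqne 3))).sub
        ((contDiffAt_const.mul h1n).div (hq 2) (hqne 2))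
    · exact ((contDiffAt_const.mul (h1n.pow 2)).div (hq 3) (hqne 3)).sub
        ((contDiffAt_const.mul h1n).div (hq 2) (hqne 2))
  obtain ⟨f, hfT₀, η, hηpos, hfode⟩ := hv.exists_forall_mem_closedBall_exists_eq_forall_mem_Ioo_hasDerivAt₀ T₀
  have hT₀Ioo : T₀ ∈ Ioo (T₀ - η) (T₀ + η) := ⟨by linarith, by linarith⟩
  have hfode1 : ∀ u ∈ Ioo (T₀ - η) (T₀ + η),
      HasDerivAt (fun w => (f w).1) (F 2 (f u).1 (f u).2).1 u := by
    intro u hu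
    exact hasFDerivAt_fst.comp_hasDerivAt u (hfode u hu).hasFDerivAt
  have hfode2 : ∀ u ∈ Ioo (T₀ - η) (T₀ + η),
      HasDerivAt (fun w => (f w).2) (F 2 (f u).1 (f u).2).2 u := by
    intro u hu
    exact hasFDerivAt_snd.comp_hasDerivAt u (hfode u hu).hasFDerivAt
  -- f.2 stays away from 0 near T₀
  have hfc : ContinuousAt f T₀ := (hfode T₀ hT₀Ioo).continuousAt
  have hf2tend : Tendsto (fun t => (f t).2) (𝓝 T₀) (𝓝 Bstar) := by
    have : Tendsto (fun t => (f t).2) (𝓝 T₀) (𝓝 (f T₀).2) :=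
      continuous_snd.continuousAt.comp hfc
    rwa [hfT₀] at this
  have hev2 : ∀ᶠ t in 𝓝 T₀, Bstar/2 < (f t).2 :=
    hf2tend.eventually (eventually_gt_nhds (by linarith))
  obtain ⟨δ₁, hδ₁, hball⟩ := Metric.eventually_nhds_iff.mp hev2
  set δ : ℝ := min δ₁ η / 2 with hδdef
  have hδpos : 0 < δ := by
    apply div_pos (lt_min hδ₁ hηpos) (by norm_num)
  have hδδ₁ : δ ≤ δ₁ / 2 := by
    have := min_le_left δ₁ η; rw [hδdef]; linarith
  have hδη : δ ≤ η / 2 := by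
    have := min_le_right δ₁ η; rw [hδdef]; linarith
  have hfprop : ∀ t, T₀ ≤ t → t < T₀ + δ →
      t ∈ Ioo (T₀ - η) (T₀ + η) ∧ Bstar/2 < (f t).2 := by
    intro t h1 h2
    have hd : dist t T₀ < δ₁ := by
      rw [Real.dist_eq, abs_of_nonneg (by linarith)]; linarith
    exact ⟨⟨by linarith, by linarith⟩, hball hd⟩
  refine ⟨δ, hδpos, fun t => if t < T₀ then α t else (f t).1,
    fun t => if t < T₀ then β t else (f t).2, ?_, ?_⟩
  swap
  · intro t ht0 htT
    exact ⟨if_pos htT, if_pos htT⟩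
  intro t ht0 htT
  show (if t < T₀ then β t else (f t).2) ≠ 0 ∧
    HasDerivAt (fun u => if u < T₀ then α u else (f u).1)
      (F 2 (if t < T₀ then α t else (f t).1) (if t < T₀ then β t else (f t).2)).1 t ∧
    HasDerivAt (fun u => if u < T₀ then β u else (f u).2)
      (F 2 (if t < T₀ then α t else (f t).1) (if t < T₀ then β t else (f t).2)).2 t
  rcases lt_trichotomy t T₀ with hlt | heq | hgt
  · -- t < T₀ : the old solution
    have hmem : t ∈ Ico (0:ℝ) T₀ := ⟨ht0, hlt⟩
    have hEqα : (fun u => if u < T₀ then α u else (f u).1) =ᶠ[𝓝 t] α := by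
      filter_upwards [Iio_mem_nhds hlt] with w hw; exact if_pos hw
    have hEqβ : (fun u => if u < T₀ then β u else (f u).2) =ᶠ[𝓝 t] β := by
      filter_upwards [Iio_mem_nhds hlt] with w hw; exact if_pos hw
    have hvalα : (if t < T₀ then α t else (f t).1) = α t := if_pos hlt
    have hvalβ : (if t < T₀ then β t else (f t).2) = β t := if_pos hlt
    refine ⟨by rw [hvalβ]; exact (hsol t hmem).1, ?_, ?_⟩
    · rw [hvalα, hvalβ]
      exact (hEqα.hasDerivAt_iff).mpr (hsol t hmem).2.1
    · rw [hvalα, hvalβ]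
      exact (hEqβ.hasDerivAt_iff).mpr (hsol t hmem).2.2
  · -- t = T₀ : the junction
    rw [heq]
    have hvalα : (if T₀ < T₀ then α T₀ else (f T₀).1) = Astar := by
      rw [if_neg (lt_irrefl T₀), hfT₀]
    have hvalβ : (if T₀ < T₀ then β T₀ else (f T₀).2) = Bstar := by
      rw [if_neg (lt_irrefl T₀), hfT₀]
    have hLα : HasDerivAt (fun w => (f w).1) (F 2 Astar Bstar).1 T₀ := by
      have := hfode1 T₀ hT₀Ioo
      rwa [hfT₀] at this
    have hLβ : HasDerivAt (fun w => (f w).2) (F 2 Astar Bstar).2 T₀ := by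
      have := hfode2 T₀ hT₀Ioo
      rwa [hfT₀] at this
    have hF1cont : ContinuousAt (fun p : ℝ × ℝ => F 2 p.1 p.2) x₀ := hv.continuousAt
    have hpair : Tendsto (fun u => (α u, β u)) (𝓝[<] T₀) (𝓝 x₀) :=
      hαtend.prodMk_nhds hβtend
    have htend0 : Tendsto (fun u => F 2 (α u) (β u)) (𝓝[<] T₀) (𝓝 (F 2 Astar Bstar)) := by
      have h := Filter.Tendsto.comp hF1cont hpair
      exact h
    have htend1 : Tendsto (fun u => (F 2 (α u) (β u)).1) (𝓝[<] T₀)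
        (𝓝 (F 2 Astar Bstar).1) :=
      (continuous_fst.tendsto (F 2 Astar Bstar)).comp htend0
    have htend2 : Tendsto (fun u => (F 2 (α u) (β u)).2) (𝓝[<] T₀)
        (𝓝 (F 2 Astar Bstar).2) :=
      (continuous_snd.tendsto (F 2 Astar Bstar)).comp htend0
    have hda : HasDerivAt (fun u => if u < T₀ then α u else (f u).1)
        (F 2 Astar Bstar).1 T₀ :=
      bs_glue hT₀pos (fun u hu => (hsol u ⟨hu.1.le, hu.2⟩).2.1) hαtend htend1 hLα
        (by rw [hfT₀])
    have hdb : HasDerivAt (fun u => if u < T₀ then β u else (f u).2)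
        (F 2 Astar Bstar).2 T₀ :=
      bs_glue hT₀pos (fun u hu => (hsol u ⟨hu.1.le, hu.2⟩).2.2) hβtend htend2 hLβ
        (by rw [hfT₀])
    refine ⟨by rw [hvalβ]; exact ne_of_gt hBstarpos, ?_, ?_⟩
    · rw [hvalα, hvalβ]; exact hda
    · rw [hvalα, hvalβ]; exact hdb
  · -- T₀ < t
    obtain ⟨hIm, hB2⟩ := hfprop t hgt.le htT
    have hEqα : (fun u => if u < T₀ then α u else (f u).1) =ᶠ[𝓝 t] (fun u => (f u).1) := by
      filter_upwards [Ioi_mem_nhds hgt] with w hw; exact if_neg (not_lt.mpr hw.le)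
    have hEqβ : (fun u => if u < T₀ then β u else (f u).2) =ᶠ[𝓝 t] (fun u => (f u).2) := by
      filter_upwards [Ioi_mem_nhds hgt] with w hw; exact if_neg (not_lt.mpr hw.le)
    have hvalα : (if t < T₀ then α t else (f t).1) = (f t).1 := if_neg (not_lt.mpr hgt.le)
    have hvalβ : (if t < T₀ then β t else (f t).2) = (f t).2 := if_neg (not_lt.mpr hgt.le)
    refine ⟨by rw [hvalβ]; linarith, ?_, ?_⟩
    · rw [hvalα, hvalβ]
      exact (hEqα.hasDerivAt_iff).mpr (hfode1 t hIm)
    · rw [hvalα, hvalβ]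
      exact (hEqβ.hasDerivAt_iff).mpr (hfode2 t hIm)

/-- For `s = 2` and `0 < ε < 2/3`, the maximal solution with `α(0) = ε`, `β(0) = 1`
exists for all time, `α(t) → 0`, and `β(t) → β_∞ > 0` as `t → ∞`. -/
theorem collapse_s_two_short_fibers (ε : ℝ) (hε0 : 0 < ε) (hε1 : ε < 2/3)
    (α β : ℝ → ℝ) (T : ℝ≥0∞)
    (hmax : IsMaxSolution 2 α β T) (hα0 : α 0 = ε) (hβ0 : β 0 = 1) :
    T = ⊤ ∧ Tendsto α atTop (𝓝 0) ∧
      ∃ βinf : ℝ, 0 < βinf ∧ Tendsto β atTop (𝓝 βinf) := by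
  obtain ⟨hT0, hsol, hnex⟩ := hmax
  -- Part 1: global existence
  have hTtop : T = ⊤ := by
    by_contra hTne
    set T₀ : ℝ := T.toReal with hT₀def
    have hT₀pos : 0 < T₀ := ENNReal.toReal_pos hT0.ne' hTne
    have hsol' : ∀ t ∈ Ico (0:ℝ) T₀, β t ≠ 0 ∧ HasDerivAt α (F 2 (α t) (β t)).1 t ∧
        HasDerivAt β (F 2 (α t) (β t)).2 t := by
      intro t ht
      apply hsol t
      refine ⟨ht.1, ?_⟩
      rw [← ENNReal.ofReal_toReal hTne]
      exact (ENNReal.ofReal_lt_ofReal_iff_of_nonneg ht.1).mpr ht.2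
    obtain ⟨δ, hδpos, α', β', hsolext, hagree⟩ :=
      bs_extend hε0 hε1 hα0 hβ0 hT₀pos hsol'
    apply hnex
    refine ⟨ENNReal.ofReal (T₀ + δ), α', β', ?_, ?_, ?_⟩
    · rw [← ENNReal.ofReal_toReal hTne]
      exact (ENNReal.ofReal_lt_ofReal_iff (by linarith)).mpr (by linarith)
    · intro t ht
      have h2 : t < T₀ + δ := by
        have := ht.2
        rwa [ENNReal.ofReal_lt_ofReal_iff_of_nonneg ht.1] at this
      exact hsolext t ht.1 h2
    · intro t ht
      have h2 : t < T₀ := by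
        have := ht.2
        rw [← ENNReal.ofReal_toReal hTne] at this
        rwa [ENNReal.ofReal_lt_ofReal_iff_of_nonneg ht.1] at this
      exact hagree t ht.1 h2
  -- Part 2: asymptotics
  have hsolt : ∀ t : ℝ, 0 ≤ t → β t ≠ 0 ∧ HasDerivAt α (F 2 (α t) (β t)).1 t ∧
      HasDerivAt β (F 2 (α t) (β t)).2 t := by
    intro t ht
    apply hsol t
    exact ⟨ht, by rw [hTtop]; exact ENNReal.ofReal_lt_top⟩
  have hfacts : ∀ t : ℝ, 0 ≤ t → 0 < α t ∧ 3 * α t < 2 * β t ∧ 0 < β t ∧ β t ≤ 1 ∧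
      (2 - 3*ε)^2 / (1 - ε) ≤ 12 * (β t)^4 := by
    intro t ht
    exact bs_invariant hε0 hε1 hα0 hβ0 ht (fun u hu => hsolt u hu.1) t ⟨ht, le_rfl⟩
  have hdecay : ∀ t : ℝ, 0 ≤ t → α t ≤ ε * Real.exp (-(t/36)) := by
    intro t ht
    apply bs_exp_decay hα0 (fun u (hu : u ∈ Icc 0 t) => hsolt u hu.1)
      (fun u hu => ⟨(hfacts u hu.1).1.le, (hfacts u hu.1).2.1.le,
        (hfacts u hu.1).2.2.1, (hfacts u hu.1).2.2.2.1⟩) t ⟨ht, le_rfl⟩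
  refine ⟨hTtop, ?_, ?_⟩
  · -- α → 0
    have hupper : Tendsto (fun t : ℝ => ε * Real.exp (-(t/36))) atTop (𝓝 0) := by
      have h1 : Tendsto (fun t : ℝ => t/36) atTop atTop :=
        tendsto_id.atTop_div_const (by norm_num)
      have h2 : Tendsto (fun t : ℝ => -(t/36)) atTop atBot :=
        tendsto_neg_atTop_atBot.comp h1
      have h3 : Tendsto (fun t : ℝ => Real.exp (-(t/36))) atTop (𝓝 0) :=
        Real.tendsto_exp_atBot.comp h2
      have := h3.const_mul ε
      simpa using this
    apply tendsto_of_tendsto_of_tendsto_of_le_of_le' tendsto_const_nhds hupper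
    · filter_upwards [eventually_ge_atTop (0:ℝ)] with t ht
      exact (hfacts t ht).1.le
    · filter_upwards [eventually_ge_atTop (0:ℝ)] with t ht
      exact hdecay t ht
  · -- β → βinf > 0
    set E₀ : ℝ := (2 - 3*ε)^2 / (1 - ε) with hE₀def
    have hE₀pos : 0 < E₀ := div_pos (by nlinarith) (by linarith)
    set b : ℝ := (E₀/12) ^ ((1:ℝ)/4) with hbdef
    have hbpos : 0 < b := Real.rpow_pos_of_pos (by positivity) _
    have hb4 : b^4 = E₀/12 := by
      rw [hbdef, ← Real.rpow_natCast ((E₀/12) ^ ((1:ℝ)/4)) 4, ← Real.rpow_mul (by positivity)]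
      norm_num
    have hβge : ∀ t : ℝ, 0 ≤ t → b ≤ β t := by
      intro t ht
      have h4 : b^4 ≤ (β t)^4 := by rw [hb4]; linarith [(hfacts t ht).2.2.2.2]
      exact le_of_pow_le_pow_left₀ (by norm_num) (hfacts t ht).2.2.1.le h4
    have hβanti2 : ∀ x y : ℝ, 0 ≤ x → x ≤ y → β y ≤ β x := by
      intro x y hx hxy
      exact bs_beta_anti (fun u (hu : u ∈ Icc 0 y) => hsolt u hu.1)
        (fun u hu => ⟨(hfacts u hu.1).1.le, (hfacts u hu.1).2.1.le, (hfacts u hu.1).2.2.1⟩)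
        ⟨hx, hxy⟩ ⟨le_trans hx hxy, le_rfl⟩ hxy
    set g : ℝ → ℝ := fun t => β (max t 0) with hgdef
    have hganti : Antitone g := by
      intro s t hst
      exact hβanti2 (max s 0) (max t 0) (le_max_right s 0) (max_le_max hst le_rfl)
    have hgbdd : BddBelow (range g) := by
      refine ⟨b, ?_⟩
      rintro y ⟨t, rfl⟩
      exact hβge _ (le_max_right t 0)
    have hgt := tendsto_atTop_ciInf hganti hgbdd
    refine ⟨⨅ t, g t, ?_, ?_⟩
    · have hble : b ≤ ⨅ t, g t := le_ciInf (fun t => hβge _ (le_max_right t 0))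
      linarith
    · apply Filter.Tendsto.congr' _ hgt
      filter_upwards [eventually_ge_atTop (0:ℝ)] with t ht
      show β (max t 0) = β t
      rw [max_eq_left ht]
end

section
/- Let s = 2. The functions α(t) = (1/9)·√(36 − 3t) and β(t) = (1/6)·√(36 − 3t), defined for t ∈ [0, 12), form a solution of the system with α(0) = 2/3 and β(0) = 1; along this solution α(t) = (2/3)·β(t) for all t, and α(t) → 0, β(t) → 0 as t → 12. In particular, the maximal time of existence of the solution with initial value (2/3, 1) is t_max = 12. -/
open Real Filter Set Topology
open scoped ENNReal

/-- The explicit solution for `s = 2`, `ε = 2/3`: `α(t) = (1/9)√(36 - 3t)`. -/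
noncomputable def αex (t : ℝ) : ℝ := (1/9) * Real.sqrt (36 - 3*t)

/-- The explicit solution for `s = 2`, `ε = 2/3`: `β(t) = (1/6)√(36 - 3t)`. -/
noncomputable def βex (t : ℝ) : ℝ := (1/6) * Real.sqrt (36 - 3*t)

lemma sqrt_deriv {t : ℝ} (ht : t < 12) :
    HasDerivAt (fun t : ℝ => Real.sqrt (36 - 3*t))
      (1 / (2 * Real.sqrt (36 - 3*t)) * (-3)) t := by
  have hu : (0:ℝ) < 36 - 3*t := by linarith
  have h1 : HasDerivAt (fun t : ℝ => 36 - 3*t) (-3) t := by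
    simpa [Pi.sub_def] using ((hasDerivAt_const t (36:ℝ)).sub ((hasDerivAt_id t).const_mul 3))
  exact (Real.hasDerivAt_sqrt (ne_of_gt hu)).comp t h1

lemma sol_Ico : IsSolutionOn 2 αex βex (Set.Ico 0 12) := by
  rintro t ⟨ht0, ht12⟩
  have hu : (0:ℝ) < 36 - 3*t := by linarith
  have hc : 0 < Real.sqrt (36 - 3*t) := Real.sqrt_pos.mpr hu
  set c := Real.sqrt (36 - 3*t) with hcdef
  have hα : αex t = (1/9) * c := rfl
  have hβ : βex t = (1/6) * c := rfl
  have hcne : c ≠ 0 := ne_of_gt hc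
  refine ⟨by rw [hβ]; positivity, ?_, ?_⟩
  · have hda : HasDerivAt αex ((1/9) * (1 / (2 * c) * (-3))) t :=
      (sqrt_deriv ht12).const_mul (1/9)
    have : (F 2 (αex t) (βex t)).1 = (1/9) * (1 / (2 * c) * (-3)) := by
      rw [hα, hβ]; simp only [F]; field_simp; ring
    rw [this]; exact hda
  · have hdb : HasDerivAt βex ((1/6) * (1 / (2 * c) * (-3))) t :=
      (sqrt_deriv ht12).const_mul (1/6)
    have : (F 2 (αex t) (βex t)).2 = (1/6) * (1 / (2 * c) * (-3)) := by
      rw [hα, hβ]; simp only [F]; field_simp; ring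
    rw [this]; exact hdb

lemma domain_eq : domainUpTo (ENNReal.ofReal 12) = Set.Ico 0 12 := by
  ext t
  simp only [domainUpTo, Set.mem_setOf_eq, Set.mem_Ico]
  constructor
  · rintro ⟨h0, h1⟩
    exact ⟨h0, by rwa [ENNReal.ofReal_lt_ofReal_iff (by norm_num)] at h1⟩
  · rintro ⟨h0, h1⟩
    exact ⟨h0, by rwa [ENNReal.ofReal_lt_ofReal_iff (by norm_num)]⟩

lemma tend_βex : Tendsto βex (𝓝[<] (12:ℝ)) (𝓝 0) := by
  have hcont : Continuous βex := by
    unfold βex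
    exact continuous_const.mul (Real.continuous_sqrt.comp (by continuity))
  have h0 : βex 12 = 0 := by
    unfold βex; norm_num
  rw [← h0]
  exact (hcont.tendsto 12).mono_left nhdsWithin_le_nhds

lemma tend_αex : Tendsto αex (𝓝[<] (12:ℝ)) (𝓝 0) := by
  have hcont : Continuous αex := by
    unfold αex
    exact continuous_const.mul (Real.continuous_sqrt.comp (by continuity))
  have h0 : αex 12 = 0 := by
    unfold αex; norm_num
  rw [← h0]
  exact (hcont.tendsto 12).mono_left nhdsWithin_le_nhds

/-- For `s = 2`, the functions `α(t) = (1/9)√(36 - 3t)`, `β(t) = (1/6)√(36 - 3t)`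
form a solution on `[0, 12)` with `α(0) = 2/3`, `β(0) = 1`; along it `α = (2/3)β`,
both tend to `0` as `t → 12⁻`, and it is a maximal solution with `t_max = 12`. -/
theorem explicit_solution_eps_two_thirds :
    IsSolutionOn 2 αex βex (Set.Ico 0 12) ∧
    αex 0 = 2/3 ∧ βex 0 = 1 ∧
    (∀ t ∈ Set.Ico (0:ℝ) 12, αex t = (2/3) * βex t) ∧
    Tendsto αex (𝓝[<] 12) (𝓝 0) ∧ Tendsto βex (𝓝[<] 12) (𝓝 0) ∧
    IsMaxSolution 2 αex βex (ENNReal.ofReal 12) := by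
  refine ⟨sol_Ico, ?_, ?_, ?_, tend_αex, tend_βex, ?_⟩
  · unfold αex
    rw [show (36 - 3*(0:ℝ)) = 6^2 by norm_num, Real.sqrt_sq (by norm_num)]
    norm_num
  · unfold βex
    rw [show (36 - 3*(0:ℝ)) = 6^2 by norm_num, Real.sqrt_sq (by norm_num)]
    norm_num
  · intro t _
    unfold αex βex; ring
  · refine ⟨by simp, by rw [domain_eq]; exact sol_Ico, ?_⟩
    rintro ⟨T', α', β', hT, hsol', hagree⟩
    have h12 : (12:ℝ) ∈ domainUpTo T' := ⟨by norm_num, hT⟩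
    obtain ⟨hb0, _, hdb⟩ := hsol' 12 h12
    have hcont : ContinuousAt β' 12 := hdb.continuousAt
    have hT2 : Tendsto β' (𝓝[<] (12:ℝ)) (𝓝 (β' 12)) :=
      hcont.continuousWithinAt.tendsto
    have hev : β' =ᶠ[𝓝[<] (12:ℝ)] βex := by
      have hmem : Set.Ico (0:ℝ) 12 ∈ 𝓝[<] (12:ℝ) :=
        Ico_mem_nhdsLT_of_mem (by constructor <;> norm_num)
      filter_upwards [hmem] with t ht
      exact (hagree t (domain_eq ▸ ht)).2
    have hT3 : Tendsto β' (𝓝[<] (12:ℝ)) (𝓝 0) :=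
      tend_βex.congr' hev.symm
    have : β' 12 = 0 := tendsto_nhds_unique hT2 hT3
    exact hb0 this
end

section
/- Let s = 2. The functions α(t) = β(t) = (1/4)·√(16 − t), defined for t ∈ [0, 16), form a solution of the system with α(0) = β(0) = 1, and α(t) = β(t) → 0 as t → 16. In particular, the maximal time of existence of the solution with initial value (1, 1) is t_max = 16; the round Berger sphere (ε = 1) shrinks homothetically to a point under the spinor flow. -/
open Real Filter Set Topology
open scoped ENNReal

/-- The explicit solution for `s = 2`, `ε = 1`: `α(t) = β(t) = (1/4)√(16 - t)`. -/
noncomputable def γex (t : ℝ) : ℝ := (1/4) * Real.sqrt (16 - t)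

lemma gamma_cont : Continuous γex := by
  unfold γex; fun_prop

lemma gamma_sol : IsSolutionOn 2 γex γex (Set.Ico 0 16) := by
  rintro t ⟨ht0, ht16⟩
  have hpos : (0:ℝ) < 16 - t := by linarith
  have hs : 0 < Real.sqrt (16 - t) := Real.sqrt_pos.2 hpos
  have hsq : Real.sqrt (16 - t) ^ 2 = 16 - t := Real.sq_sqrt hpos.le
  have hne : γex t ≠ 0 := by
    unfold γex; positivity
  have h1 : HasDerivAt (fun t : ℝ => 16 - t) (-1) t := by
    exact (hasDerivAt_id' t).const_sub (16:ℝ)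
  have hd : HasDerivAt γex ((1/4) * (1 / (2 * Real.sqrt (16 - t)) * (-1))) t :=
    ((Real.hasDerivAt_sqrt hpos.ne').comp t h1).const_mul (1/4)
  have key : (1/4 : ℝ) * (1 / (2 * Real.sqrt (16 - t)) * (-1)) =
      -(1/32) / γex t := by
    unfold γex
    field_simp
    ring
  have h2 : (F 2 (γex t) (γex t)).1 = -(1/32) / γex t := by
    simp only [F]
    field_simp
    ring
  have h3 : (F 2 (γex t) (γex t)).2 = -(1/32) / γex t := by
    simp only [F]
    field_simp
    ring
  refine ⟨hne, ?_, ?_⟩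
  · rw [h2, ← key]; exact hd
  · rw [h3, ← key]; exact hd

lemma domain16 : domainUpTo (ENNReal.ofReal 16) = Set.Ico 0 16 := by
  ext t
  simp [domainUpTo, ENNReal.ofReal_lt_ofReal_iff (by norm_num : (0:ℝ) < 16), Set.mem_Ico]

/-- For `s = 2`, the functions `α(t) = β(t) = (1/4)√(16 - t)` form a solution on
`[0, 16)` with `α(0) = β(0) = 1`, tending to `0` as `t → 16⁻`; it is a maximal
solution with `t_max = 16` (the round sphere shrinks homothetically to a point). -/
theorem explicit_solution_eps_one :
    IsSolutionOn 2 γex γex (Set.Ico 0 16) ∧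
    γex 0 = 1 ∧
    Tendsto γex (𝓝[<] 16) (𝓝 0) ∧
    IsMaxSolution 2 γex γex (ENNReal.ofReal 16) := by
  have h0 : γex 0 = 1 := by
    unfold γex
    rw [show (16:ℝ) - 0 = 4^2 by norm_num, Real.sqrt_sq (by norm_num)]
    norm_num
  have htend : Tendsto γex (𝓝[<] 16) (𝓝 0) := by
    have : γex 16 = 0 := by unfold γex; simp
    have h2 : Tendsto γex (𝓝[<] 16) (𝓝 (γex 16)) :=
      (gamma_cont.tendsto 16).mono_left nhdsWithin_le_nhds
    rwa [this] at h2
  refine ⟨gamma_sol, h0, htend, ?_, ?_, ?_⟩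
  · simp
  · rw [domain16]; exact gamma_sol
  · rintro ⟨T', α', β', hTT', hsol', hagree⟩
    have h16mem : (16:ℝ) ∈ domainUpTo T' := ⟨by norm_num, hTT'⟩
    obtain ⟨hβne, -, hβd⟩ := hsol' 16 h16mem
    have hβcont : Tendsto β' (𝓝[<] 16) (𝓝 (β' 16)) :=
      (hβd.continuousAt.tendsto).mono_left nhdsWithin_le_nhds
    have heq : β' =ᶠ[𝓝[<] 16] γex := by
      filter_upwards [Ioo_mem_nhdsLT_of_mem (by norm_num : (16:ℝ) ∈ Set.Ioc 0 16)] with t ht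
      exact (hagree t (by rw [domain16]; exact ⟨ht.1.le, ht.2⟩)).2
    have : Tendsto β' (𝓝[<] 16) (𝓝 0) := htend.congr' heq.symm
    have hβ0 : β' 16 = 0 := tendsto_nhds_unique hβcont this
    exact hβne hβ0
end
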